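/- arXiv:2103.04063 — 6 statements merged into one kernel-verified Lean document; each statement's English description precedes it below -/
import Mathlib

section
/- Let μ be an infinite cardinal and S a set. If F ⊆ P(S) is a μ-free family with μ ≤ |F|, then |F|^{<μ} ≤ 2^{|S|}. -/
open Cardinal Set

universe u

/-- A family `F ⊆ 𝒫(S)` is `μ`-free if every Boolean combination of fewer than `μ`
members (intersection of one disjoint subfamily minus the union of another) is
nonempty.  By convention `⋂₀ ∅ = univ`. -/
def MuFree {S : Type u} (μ : Cardinal.{u}) (F : Set (Set S)) : Prop :=
  ∀ A B : Set (Set S), A ⊆ F → B ⊆ F → Disjoint A B → #A < μ → #B < μ →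
    (⋂₀ A \ ⋃₀ B).Nonempty

/-- If `μ` is infinite and `F ⊆ 𝒫(S)` is a `μ`-free family with
`μ ≤ |F|`, then `|F| ^ (< μ) ≤ 2 ^ |S|`. -/
theorem stmt_1 {S : Type u} (μ : Cardinal.{u}) (hμ : Cardinal.aleph0 ≤ μ)
    (F : Set (Set S)) (hfree : MuFree μ F) (hcard : μ ≤ #F) :
    (#F) ^< μ ≤ 2 ^ #S := by
  have hF2 : #F ≤ 2 ^ #S := by
    calc #F ≤ #(Set S) := mk_set_le F
    _ = 2 ^ #S := mk_set
  have hSinf : ℵ₀ ≤ #S := by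
    by_contra h
    push_neg at h
    have h2 : (2 : Cardinal) ^ #S < ℵ₀ := power_lt_aleph0 (nat_lt_aleph0 2) h
    exact absurd (hμ.trans (hcard.trans hF2)) (not_le.2 h2)
  rw [powerlt_le]
  intro ν hν
  have hνS : ν ≤ #S := by
    obtain ⟨A, hAF, hAcard⟩ := le_mk_iff_exists_subset.mp (hν.le.trans hcard)
    have hpt : ∀ X : A, ∃ s : S, s ∈ (X : Set S) ∧ s ∉ ⋃₀ (A \ {(X : Set S)}) := by
      intro X
      have h1 : ({(X : Set S)} : Set (Set S)) ⊆ F := by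
        simp only [singleton_subset_iff]; exact hAF X.2
      have h2 : A \ {(X : Set S)} ⊆ F := (diff_subset).trans hAF
      have hd : Disjoint ({(X : Set S)} : Set (Set S)) (A \ {(X : Set S)}) := by
        simp [disjoint_left]
      have hc1 : #({(X : Set S)} : Set (Set S)) < μ := by
        rw [mk_singleton]; exact one_lt_aleph0.trans_le hμ
      have hc2 : #(A \ {(X : Set S)} : Set (Set S)) < μ := by
        calc #(A \ {(X : Set S)} : Set (Set S)) ≤ #A := mk_le_mk_of_subset diff_subset
        _ = ν := hAcard
        _ < μ := hν
      obtain ⟨s, hs⟩ := hfree _ _ h1 h2 hd hc1 hc2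
      rw [sInter_singleton] at hs
      exact ⟨s, hs.1, hs.2⟩
    choose f hf1 hf2 using hpt
    have hinj : Function.Injective f := by
      intro X Y hXY
      by_contra hne
      have hcoe : (X : Set S) ≠ (Y : Set S) := fun h => hne (Subtype.coe_injective h)
      apply hf2 Y
      exact ⟨X, ⟨X.2, by simpa using hcoe⟩, hXY ▸ hf1 X⟩
    calc ν = #A := hAcard.symm
    _ ≤ #S := mk_le_of_injective hinj
  calc #F ^ ν ≤ (2 ^ #S) ^ ν := power_le_power_right hF2
  _ = 2 ^ (#S * ν) := power_mul.symm
  _ ≤ 2 ^ #S := by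
      apply power_le_power_left two_ne_zero
      calc #S * ν ≤ #S * #S := mul_le_mul_right hνS _
      _ = #S := mul_eq_self hSinf
end

section
/- Suppose F ⊆ P(κ) is a (μ,κ)-independent family with |F|^{<μ} ≤ κ. Then F is not maximal: there exists Y ⊆ κ such that F ∪ {Y} is a strictly larger (μ,κ)-independent family. Consequently, if the (μ,κ)-independence spectrum is nonempty, then κ < i_μ(κ)^{<μ}. -/
open Cardinal Set

universe u

/-- A `(μ,κ)`-independent family: `μ`-free, and every Boolean combination of fewer
than `μ` members has cardinality `κ`. -/
def Indep {S : Type u} (μ κ : Cardinal.{u}) (F : Set (Set S)) : Prop :=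
  MuFree μ F ∧
    ∀ A B : Set (Set S), A ⊆ F → B ⊆ F → Disjoint A B → #A < μ → #B < μ →
      #(⋂₀ A \ ⋃₀ B : Set S) = κ

open Ordinal in
instance (o : Ordinal.{u}) : IsWellOrder o.ToType (· < ·) := isWellOrder_lt

open Ordinal

lemma exists_wf_choice {O S : Type u} [LinearOrder O] [WellFoundedLT O] (T : O → Set S)
    (hT : ∀ (b : O) (g : ∀ c : O, c < b → S), ∃ x ∈ T b, ∀ c (h : c < b), x ≠ g c h) :
    ∃ y : O → S, ∀ b, y b ∈ T b ∧ ∀ c, c < b → y b ≠ y c := by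
  have wf : WellFounded ((· < ·) : O → O → Prop) := wellFounded_lt
  refine ⟨wf.fix (fun b ih => (hT b ih).choose), fun b => ?_⟩
  set y : O → S := wf.fix (fun b ih => (hT b ih).choose) with hy
  have heq : y b = (hT b (fun c _ => y c)).choose := wf.fix_eq _ b
  obtain ⟨h1, h2⟩ := (hT b (fun c _ => y c)).choose_spec
  rw [← heq] at h1 h2
  exact ⟨h1, fun c hc => h2 c hc⟩

lemma exists_splitter {S : Type u} {κ : Cardinal.{u}} (hκ : #S = κ) (hinf : ℵ₀ ≤ κ)
    {ι : Type u} (hι : #ι ≤ κ) (X : ι → Set S) (hX : ∀ i, #(X i) = κ) :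
    ∃ Y : Set S, ∀ i, #((X i ∩ Y : Set S)) = κ ∧ #((X i \ Y : Set S)) = κ := by
  rcases isEmpty_or_nonempty ι with hemp | hne
  · exact ⟨∅, fun i => (IsEmpty.false i).elim⟩
  have h2κ : (2 : Cardinal) ≤ κ := by
    refine le_trans ?_ hinf; exact_mod_cast (nat_lt_aleph0 2).le
  have hcard : #(ι × Bool × κ.ord.ToType) = κ := by
    simp only [mk_prod, Cardinal.lift_id, Cardinal.lift_uzero, Cardinal.lift_ofNat, mk_bool, mk_ord_toType]
    apply le_antisymm
    · calc #ι * (2 * κ) ≤ κ * (κ * κ) := by gcongr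
        _ = κ := by rw [mul_eq_self hinf, mul_eq_self hinf]
    · calc κ = 1 * (1 * κ) := by rw [one_mul, one_mul]
        _ ≤ #ι * (2 * κ) := by
            gcongr
            · exact Cardinal.one_le_iff_ne_zero.mpr (mk_ne_zero ι)
            · exact one_le_two
  obtain ⟨f⟩ : Nonempty (κ.ord.ToType ≃ (ι × Bool × κ.ord.ToType)) :=
    Cardinal.eq.mp ((mk_ord_toType κ).trans hcard.symm)
  have hT : ∀ (b : κ.ord.ToType) (g : ∀ c : κ.ord.ToType, c < b → S),
      ∃ x ∈ X (f b).1, ∀ c (h : c < b), x ≠ g c h := by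
    intro b g
    by_contra hcon
    push_neg at hcon
    have hsub : X (f b).1 ⊆ range (fun c : Iio b => g c.1 c.2) := by
      intro x hx
      obtain ⟨c, hc, he⟩ := hcon x hx
      exact ⟨⟨c, hc⟩, he.symm⟩
    have : κ ≤ #(Iio b) :=
      (hX (f b).1).symm.trans_le ((mk_le_mk_of_subset hsub).trans mk_range_le)
    exact absurd this (not_le.mpr (mk_Iio_ord_toType b))
  obtain ⟨y, hy⟩ := exists_wf_choice _ hT
  have yinj : Function.Injective y := by
    intro a b h
    by_contra hne
    rcases Ne.lt_or_gt hne with hl | hl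
    · exact (hy b).2 a hl h.symm
    · exact (hy a).2 b hl h
  refine ⟨y '' {b | (f b).2.1 = true}, fun i => ?_⟩
  set Y := y '' {b | (f b).2.1 = true} with hYdef
  have hup : ∀ s : Set S, #s ≤ κ := fun s => hκ ▸ mk_set_le s
  have hmem1 : ∀ o : κ.ord.ToType, y (f.symm (i, true, o)) ∈ X i ∩ Y := by
    intro o
    refine ⟨?_, ⟨f.symm (i, true, o), by rw [mem_setOf_eq, f.apply_symm_apply], rfl⟩⟩
    have h := (hy (f.symm (i, true, o))).1
    rwa [f.apply_symm_apply] at h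
  have hmem2 : ∀ o : κ.ord.ToType, y (f.symm (i, false, o)) ∈ X i \ Y := by
    intro o
    constructor
    · have h := (hy (f.symm (i, false, o))).1
      rwa [f.apply_symm_apply] at h
    · rintro ⟨c, hc, hce⟩
      have hcb := yinj hce
      rw [hcb, mem_setOf_eq, f.apply_symm_apply] at hc
      simp at hc
  constructor
  · refine le_antisymm (hup _) ?_
    have hinj : Function.Injective (fun o : κ.ord.ToType => (⟨_, hmem1 o⟩ : (X i ∩ Y : Set S))) := by
      intro a b h
      have h2 := yinj (congrArg Subtype.val h)
      simpa using f.symm.injective h2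
    calc κ = #κ.ord.ToType := (mk_ord_toType κ).symm
      _ ≤ _ := mk_le_of_injective hinj
  · refine le_antisymm (hup _) ?_
    have hinj : Function.Injective (fun o : κ.ord.ToType => (⟨_, hmem2 o⟩ : (X i \ Y : Set S))) := by
      intro a b h
      have h2 := yinj (congrArg Subtype.val h)
      simpa using f.symm.injective h2
    calc κ = #κ.ord.ToType := (mk_ord_toType κ).symm
      _ ≤ _ := mk_le_of_injective hinj

lemma mk_small_le {S : Type u} (μ κ : Cardinal.{u}) (hμ : μ.IsRegular) (hinf : ℵ₀ ≤ κ)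
    (F : Set (Set S)) (hsm : (#F) ^< μ ≤ κ) :
    #{A : Set (Set S) // A ⊆ F ∧ #A < μ} ≤ κ := by
  classical
  rcases lt_or_ge (#F) ℵ₀ with hfin | hFinf
  · have h1 : #{A : Set (Set S) // A ⊆ F ∧ #A < μ} ≤ #(Set ↥F) := by
      refine mk_le_of_injective (f := fun A => (Subtype.val ⁻¹' A.1 : Set ↥F)) ?_
      intro A B h
      apply Subtype.ext
      have hi := congrArg (Set.image (Subtype.val : ↥F → Set S)) h
      rwa [Set.image_preimage_eq_inter_range, Set.image_preimage_eq_inter_range,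
        Subtype.range_coe, inter_eq_self_of_subset_left A.2.1,
        inter_eq_self_of_subset_left B.2.1] at hi
    have h2 : #(Set ↥F) < ℵ₀ := by
      rw [mk_set]
      exact power_lt_aleph0 (by exact_mod_cast nat_lt_aleph0 2) hfin
    exact h1.trans (h2.le.trans hinf)
  · have hμκ : μ ≤ κ := by
      by_contra h
      push_neg at h
      have h1 : (2 : Cardinal) ^ κ ≤ (#F) ^ κ :=
        power_le_power_right ((by exact_mod_cast (nat_lt_aleph0 2).le : (2:Cardinal) ≤ ℵ₀).trans hFinf)
      have h2 : (#F) ^ κ ≤ (#F) ^< μ := le_powerlt _ h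
      exact absurd ((h1.trans h2).trans hsm) (not_le.mpr (cantor κ))
    have hsurj : ∀ A : {A : Set (Set S) // A ⊆ F ∧ #A < μ},
        ∃ p : Σ b : μ.ord.ToType, (Iio b → ↥F),
          A.1 = Subtype.val '' (range p.2) := by
      rintro ⟨A, hAF, hAμ⟩
      have hlt : (#A).ord < type (α := μ.ord.ToType) (· < ·) := by
        rw [type_toType]
        exact Cardinal.ord_lt_ord.mpr hAμ
      set b := enum (α := μ.ord.ToType) (· < ·) ⟨(#A).ord, hlt⟩ with hb
      have hcardIio : #(Iio b) = #A := by
        have h1 : #(Iio b) = (typein (α := μ.ord.ToType) (· < ·) b).card := card_typein (r := ((· < ·) : μ.ord.ToType → μ.ord.ToType → Prop)) b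
        rw [hb, typein_enum] at h1
        rw [h1, card_ord]
      obtain ⟨e⟩ : Nonempty (↥(Iio b) ≃ ↥A) := Cardinal.eq.mp hcardIio
      refine ⟨⟨b, fun c => ⟨(e c).1, hAF (e c).2⟩⟩, ?_⟩
      ext x
      simp only [mem_image, mem_range]
      constructor
      · intro hx
        exact ⟨⟨x, hAF hx⟩, ⟨e.symm ⟨x, hx⟩, by simp⟩, rfl⟩
      · rintro ⟨w, ⟨c, hc⟩, rfl⟩
        have : w.1 = ((e c).1 : Set S) := congrArg Subtype.val hc.symm
        rw [this]
        exact (e c).2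
    choose Φ hΦ using hsurj
    have hΦinj : Function.Injective Φ := by
      intro A B h
      apply Subtype.ext
      rw [hΦ A, hΦ B, h]
    have h1 : #{A : Set (Set S) // A ⊆ F ∧ #A < μ} ≤ #(Σ b : μ.ord.ToType, (Iio b → ↥F)) :=
      mk_le_of_injective hΦinj
    have h2 : #(Σ b : μ.ord.ToType, (Iio b → ↥F)) ≤ μ * ((#F) ^< μ) := by
      rw [mk_sigma]
      calc (Cardinal.sum fun b : μ.ord.ToType => #(Iio b → ↥F))
          ≤ Cardinal.sum fun _ : μ.ord.ToType => (#F) ^< μ := by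
            refine sum_le_sum _ _ fun b => ?_
            rw [← power_def]
            exact le_powerlt _ (mk_Iio_ord_toType b)
        _ = #μ.ord.ToType * ((#F) ^< μ) := sum_const' _ _
        _ = μ * ((#F) ^< μ) := by rw [mk_ord_toType]
    refine (h1.trans h2).trans ?_
    calc μ * ((#F) ^< μ) ≤ κ * κ := by gcongr
      _ = κ := mul_eq_self hinf

lemma exists_ext {S : Type u} (μ κ : Cardinal.{u}) (hμ : μ.IsRegular) (hκ : #S = κ)
    (hinf : ℵ₀ ≤ κ) (F : Set (Set S)) (hind : Indep μ κ F) (hsm : (#F) ^< μ ≤ κ) :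
    ∃ Y : Set S, Y ∉ F ∧ Indep μ κ (insert Y F) := by
  classical
  set P := {p : Set (Set S) × Set (Set S) //
    p.1 ⊆ F ∧ p.2 ⊆ F ∧ Disjoint p.1 p.2 ∧ #p.1 < μ ∧ #p.2 < μ} with hPdef
  have hP : #P ≤ κ := by
    have h1 : #P ≤ #({A : Set (Set S) // A ⊆ F ∧ #A < μ} ×
        {A : Set (Set S) // A ⊆ F ∧ #A < μ}) := by
      refine mk_le_of_injective (f := fun p =>
        (⟨p.1.1, p.2.1, p.2.2.2.2.1⟩, ⟨p.1.2, p.2.2.1, p.2.2.2.2.2⟩)) ?_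
      rintro ⟨⟨a1, a2⟩, _⟩ ⟨⟨b1, b2⟩, _⟩ h
      simp only [Prod.mk.injEq, Subtype.mk.injEq] at h
      exact Subtype.ext (Prod.ext h.1 h.2)
    refine h1.trans ?_
    simp only [mk_prod, Cardinal.lift_id]
    calc _ ≤ κ * κ := by
          have := mk_small_le μ κ hμ hinf F hsm
          gcongr
      _ = κ := mul_eq_self hinf
  set X : P → Set S := fun p => ⋂₀ p.1.1 \ ⋃₀ p.1.2 with hXdef
  have hX : ∀ p : P, #(X p) = κ := fun p =>
    hind.2 _ _ p.2.1 p.2.2.1 p.2.2.2.1 p.2.2.2.2.1 p.2.2.2.2.2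
  obtain ⟨Y, hY⟩ := exists_splitter hκ hinf hP X hX
  have key : ∀ A B : Set (Set S), A ⊆ F → B ⊆ F → Disjoint A B → #A < μ → #B < μ →
      #(((⋂₀ A \ ⋃₀ B) ∩ Y : Set S)) = κ ∧ #(((⋂₀ A \ ⋃₀ B) \ Y : Set S)) = κ :=
    fun A B h1 h2 h3 h4 h5 => hY ⟨(A, B), h1, h2, h3, h4, h5⟩
  have hκ0 : κ ≠ 0 := (aleph0_pos.trans_le hinf).ne'
  have hYF : Y ∉ F := by
    intro hmem
    have h := (key ∅ {Y} (empty_subset F) (singleton_subset_iff.mpr hmem)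
      (disjoint_singleton_right.mpr (fun h => h)) (by
        rw [mk_emptyCollection]; exact aleph0_pos.trans_le hμ.aleph0_le)
      (by rw [mk_singleton]; exact one_lt_aleph0.trans_le hμ.aleph0_le)).1
    have he : ((⋂₀ (∅ : Set (Set S)) \ ⋃₀ {Y}) ∩ Y) = (∅ : Set S) := by
      ext x; simp
    rw [he, mk_emptyCollection] at h
    exact hκ0 h.symm
  have main : ∀ A B : Set (Set S), A ⊆ insert Y F → B ⊆ insert Y F → Disjoint A B →
      #A < μ → #B < μ → #(⋂₀ A \ ⋃₀ B : Set S) = κ := by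
    intro A B hA hB hAB h4 h5
    by_cases hYA : Y ∈ A
    · have hYB : Y ∉ B := fun h => (disjoint_left.mp hAB) hYA h
      have hA' : A \ {Y} ⊆ F := fun x hx => (hA hx.1).resolve_left hx.2
      have hB' : B ⊆ F := fun x hx => (hB hx).resolve_left (fun e => hYB (e ▸ hx))
      have hd : Disjoint (A \ {Y}) B := hAB.mono_left diff_subset
      have hc : #(A \ {Y} : Set (Set S)) < μ := (mk_le_mk_of_subset diff_subset).trans_lt h4
      have hk := (key _ _ hA' hB' hd hc h5).1
      have hset : ⋂₀ A \ ⋃₀ B = (⋂₀ (A \ {Y}) \ ⋃₀ B) ∩ Y := by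
        ext x
        simp only [mem_diff, mem_sInter, mem_inter_iff, mem_singleton_iff]
        constructor
        · rintro ⟨h1, h2⟩
          exact ⟨⟨fun t ht => h1 t ht.1, h2⟩, h1 Y hYA⟩
        · rintro ⟨⟨h1, h2⟩, h3⟩
          refine ⟨fun t ht => ?_, h2⟩
          by_cases e : t = Y
          · exact e ▸ h3
          · exact h1 t ⟨ht, e⟩
      rw [hset]
      exact hk
    · by_cases hYB : Y ∈ B
      · have hB' : B \ {Y} ⊆ F := fun x hx => (hB hx.1).resolve_left hx.2
        have hA' : A ⊆ F := fun x hx => (hA hx).resolve_left (fun e => hYA (e ▸ hx))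
        have hd : Disjoint A (B \ {Y}) := hAB.mono_right diff_subset
        have hc : #(B \ {Y} : Set (Set S)) < μ := (mk_le_mk_of_subset diff_subset).trans_lt h5
        have hk := (key _ _ hA' hB' hd h4 hc).2
        have hset : ⋂₀ A \ ⋃₀ B = (⋂₀ A \ ⋃₀ (B \ {Y})) \ Y := by
          ext x
          simp only [mem_diff, mem_sUnion, mem_singleton_iff, not_exists, not_and]
          constructor
          · rintro ⟨h1, h2⟩
            exact ⟨⟨h1, fun t ht => h2 t ht.1⟩, fun hxY => h2 Y hYB hxY⟩
          · rintro ⟨⟨h1, h2⟩, h3⟩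
            refine ⟨h1, fun t ht hxt => ?_⟩
            by_cases e : t = Y
            · exact h3 (e ▸ hxt)
            · exact h2 t ⟨ht, e⟩ hxt
        rw [hset]
        exact hk
      · have hA' : A ⊆ F := fun x hx => (hA hx).resolve_left (fun e => hYA (e ▸ hx))
        have hB' : B ⊆ F := fun x hx => (hB hx).resolve_left (fun e => hYB (e ▸ hx))
        exact hind.2 A B hA' hB' hAB h4 h5
  refine ⟨Y, hYF, ?_, main⟩
  intro A B hA hB hd h4 h5
  have h := main A B hA hB hd h4 h5
  have hne : #(⋂₀ A \ ⋃₀ B : Set S) ≠ 0 := h ▸ hκ0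
  exact nonempty_coe_sort.mp (mk_ne_zero_iff.mp hne)

/-- If `F ⊆ 𝒫(κ)` is a `(μ,κ)`-independent family with `|F|^{<μ} ≤ κ`,
then `F` is not maximal: some `Y ∉ F` gives a strictly larger `(μ,κ)`-independent
family.  Consequently every `(μ,κ)`-maximal independent family `G` satisfies
`κ < |G|^{<μ}` (so `κ < 𝔦_μ(κ)^{<μ}` when the spectrum is nonempty). -/
theorem stmt_2 {S : Type u} (μ κ : Cardinal.{u}) (hμ : μ.IsRegular)
    (hκ : #S = κ) (hinf : Cardinal.aleph0 ≤ κ)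
    (F : Set (Set S)) (hind : Indep μ κ F) (hsm : (#F) ^< μ ≤ κ) :
    (∃ Y : Set S, Y ∉ F ∧ Indep μ κ (insert Y F)) ∧
    (∀ G : Set (Set S), Indep μ κ G →
      (∀ G' : Set (Set S), G ⊆ G' → MuFree μ G' → G' = G) → κ < (#G) ^< μ) := by
  constructor
  · exact exists_ext μ κ hμ hκ hinf F hind hsm
  · intro G hG hmax
    by_contra h
    push_neg at h
    obtain ⟨Y, hY, hY2⟩ := exists_ext μ κ hμ hκ hinf G hG h
    have he := hmax (insert Y G) (subset_insert Y G) hY2.1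
    exact hY (he ▸ mem_insert Y G)
end

section
/- Let F ⊆ P(κ) be a μ-free family of cardinality θ, with μ regular. Define the density ideal I_F as the set of Y ⊆ κ such that {p ∈ Add(μ,θ) : X_p ∩ Y = ∅} is dense in Add(μ,θ). Then I_F is a μ-complete ideal on κ. -/
open Cardinal Set

universe u

/-- A condition of the Cohen forcing `Add(μ, I)`: a pair of disjoint subsets of the
index set `I`, both of cardinality `< μ` (the positive and negative coordinates of a
partial function `I → 2` of size `< μ`). -/
structure AddCond (μ : Cardinal.{u}) (I : Type u) where
  pos : Set I
  neg : Set I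
  disj : Disjoint pos neg
  posSmall : #pos < μ
  negSmall : #neg < μ

/-- `q` extends (is stronger than) `p`. -/
def AddLe {μ : Cardinal.{u}} {I : Type u} (q p : AddCond μ I) : Prop :=
  p.pos ⊆ q.pos ∧ p.neg ⊆ q.neg

/-- The Boolean combination of the family `f` coded by the condition `p`:
`X_p = ⋂_{i ∈ pos} f i \ ⋃_{i ∈ neg} f i`. -/
def XInd {μ : Cardinal.{u}} {I : Type u} {S : Type u} (f : I → Set S)
    (p : AddCond μ I) : Set S :=
  (⋂ i ∈ p.pos, f i) \ ⋃ i ∈ p.neg, f i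

/-- The density ideal of the family `f`: `Y` belongs to it iff the set of conditions
`p` with `X_p ∩ Y = ∅` is dense in `Add(μ, I)`. -/
def densityIdeal {I : Type u} {S : Type u} (μ : Cardinal.{u}) (f : I → Set S) :
    Set (Set S) :=
  {Y | ∀ p : AddCond μ I, ∃ q : AddCond μ I, AddLe q p ∧ XInd f q ∩ Y = ∅}

lemma XInd_mono {μ : Cardinal.{u}} {I S : Type u} (f : I → Set S) {q p : AddCond μ I}
    (h : AddLe q p) : XInd f q ⊆ XInd f p := by
  rintro x ⟨h1, h2⟩
  refine ⟨?_, ?_⟩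
  · simp only [mem_iInter] at h1 ⊢
    exact fun i hi => h1 i (h.1 hi)
  · intro hx
    apply h2
    simp only [mem_iUnion] at hx ⊢
    obtain ⟨i, hi, hxi⟩ := hx
    exact ⟨i, h.2 hi, hxi⟩

lemma small_union' {ι : Type u} {μ : Cardinal.{u}} (hμ : μ.IsRegular) (hι : #ι < μ)
    {I : Type u} {s : Set I} (hs : #s < μ) {t : ι → Set I} (ht : ∀ i, #(t i) < μ) :
    #↥(s ∪ ⋃ i, t i) < μ := by
  refine lt_of_le_of_lt (mk_union_le _ _) (add_lt_of_lt hμ.aleph0_le hs ?_)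
  exact (card_iUnion_lt_iff_forall_of_isRegular hμ hι).mpr ht

open Classical in
noncomputable def buildChain {I S : Type u} {μ : Cardinal.{u}} (f : I → Set S)
    {𝒴 : Set (Set S)} (h𝒴 : ∀ Y ∈ 𝒴, Y ∈ densityIdeal μ f) (p : AddCond μ I) : ↥𝒴 → AddCond μ I :=
  (WellOrderingRel.isWellOrder (α := ↥𝒴)).wf.fix fun i A =>
    if h : Disjoint (p.pos ∪ ⋃ j : {j // WellOrderingRel j i}, (A j j.2).pos)
        (p.neg ∪ ⋃ j : {j // WellOrderingRel j i}, (A j j.2).neg) ∧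
        #↥(p.pos ∪ ⋃ j : {j // WellOrderingRel j i}, (A j j.2).pos) < μ ∧
        #↥(p.neg ∪ ⋃ j : {j // WellOrderingRel j i}, (A j j.2).neg) < μ then
      Classical.choose (h𝒴 i i.2 ⟨_, _, h.1, h.2.1, h.2.2⟩)
    else p

lemma buildChain_spec {I S : Type u} {μ : Cardinal.{u}} (hμ : μ.IsRegular) (f : I → Set S)
    {𝒴 : Set (Set S)} (h𝒴 : ∀ Y ∈ 𝒴, Y ∈ densityIdeal μ f) (p : AddCond μ I)
    (hcard : #𝒴 < μ) :
    ∀ i : ↥𝒴, (p.pos ⊆ (buildChain f h𝒴 p i).pos ∧ p.neg ⊆ (buildChain f h𝒴 p i).neg) ∧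
      (∀ j, WellOrderingRel j i →
        (buildChain f h𝒴 p j).pos ⊆ (buildChain f h𝒴 p i).pos ∧
        (buildChain f h𝒴 p j).neg ⊆ (buildChain f h𝒴 p i).neg) ∧
      XInd f (buildChain f h𝒴 p i) ∩ (i : Set S) = ∅ := by
  classical
  set A := buildChain f h𝒴 p with hA
  intro i
  induction i using ((WellOrderingRel.isWellOrder (α := ↥𝒴)).wf).induction with
  | _ i IH =>
  -- the accumulated condition at stage i
  set Upos := p.pos ∪ ⋃ j : {j // WellOrderingRel j i}, (A j).pos with hUpos
  set Uneg := p.neg ∪ ⋃ j : {j // WellOrderingRel j i}, (A j).neg with hUneg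
  have hchain : ∀ j k : ↥𝒴, WellOrderingRel j i → WellOrderingRel k i →
      ((A j).pos ⊆ (A k).pos ∧ (A j).neg ⊆ (A k).neg) ∨
      ((A k).pos ⊆ (A j).pos ∧ (A k).neg ⊆ (A j).neg) := by
    intro j k hji hki
    rcases trichotomous_of WellOrderingRel j k with h | h | h
    · exact Or.inl ((IH k hki).2.1 j h)
    · subst h; exact Or.inl ⟨subset_rfl, subset_rfl⟩
    · exact Or.inr ((IH j hji).2.1 k h)
  have hdisj : Disjoint Upos Uneg := by
    rw [Set.disjoint_left]
    rintro x hx hx'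
    rcases hx with hx | hx
    · rcases hx' with hx' | hx'
      · exact (Set.disjoint_left.mp p.disj) hx hx'
      · simp only [mem_iUnion] at hx'
        obtain ⟨⟨j, hj⟩, hxj⟩ := hx'
        exact (Set.disjoint_left.mp (A j).disj) ((IH j hj).1.1 hx) hxj
    · simp only [mem_iUnion] at hx
      obtain ⟨⟨j, hj⟩, hxj⟩ := hx
      rcases hx' with hx' | hx'
      · exact (Set.disjoint_left.mp (A j).disj) hxj ((IH j hj).1.2 hx')
      · simp only [mem_iUnion] at hx'
        obtain ⟨⟨k, hk⟩, hxk⟩ := hx'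
        rcases hchain j k hj hk with ⟨h1, _⟩ | ⟨_, h2⟩
        · exact (Set.disjoint_left.mp (A k).disj) (h1 hxj) hxk
        · exact (Set.disjoint_left.mp (A j).disj) hxj (h2 hxk)
  have hι : #{j : ↥𝒴 // WellOrderingRel j i} < μ :=
    lt_of_le_of_lt (mk_subtype_le _) hcard
  have hU1 : #↥Upos < μ := small_union' hμ hι p.posSmall (fun j => (A j.1).posSmall)
  have hU2 : #↥Uneg < μ := small_union' hμ hι p.negSmall (fun j => (A j.1).negSmall)
  have heq : A i = (if h : Disjoint Upos Uneg ∧ #↥Upos < μ ∧ #↥Uneg < μ then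
      Classical.choose (h𝒴 i i.2 ⟨Upos, Uneg, h.1, h.2.1, h.2.2⟩)
    else p) := by
    rw [hA]
    unfold buildChain
    exact WellFounded.fix_eq _ _ _
  rw [dif_pos ⟨hdisj, hU1, hU2⟩] at heq
  have key := Classical.choose_spec (h𝒴 i i.2 ⟨Upos, Uneg, hdisj, hU1, hU2⟩)
  rw [← heq] at key
  refine ⟨⟨subset_union_left.trans key.1.1, subset_union_left.trans key.1.2⟩, ?_, key.2⟩
  intro j hj
  constructor
  · exact ((subset_iUnion (fun j : {j // WellOrderingRel j i} => (A j.1).pos)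
      ⟨j, hj⟩).trans subset_union_right).trans key.1.1
  · exact ((subset_iUnion (fun j : {j // WellOrderingRel j i} => (A j.1).neg)
      ⟨j, hj⟩).trans subset_union_right).trans key.1.2

/-- For a `μ`-free family `F = {f i : i ∈ I} ⊆ 𝒫(κ)` (`μ` regular), the
density ideal `I_F` is a `μ`-complete ideal on `κ`: it contains `∅`, is closed under
subsets, and is closed under unions of fewer than `μ` of its members. -/
theorem stmt_5 {I : Type u} {S : Type u} (μ : Cardinal.{u}) (hμ : μ.IsRegular)
    (f : I → Set S) (hinj : Function.Injective f)
    (hfree : ∀ p : AddCond μ I, (XInd f p).Nonempty) :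
    (∅ : Set S) ∈ densityIdeal μ f ∧
    (∀ Y Z : Set S, Y ∈ densityIdeal μ f → Z ⊆ Y → Z ∈ densityIdeal μ f) ∧
    (∀ 𝒴 : Set (Set S), 𝒴 ⊆ densityIdeal μ f → #𝒴 < μ →
      ⋃₀ 𝒴 ∈ densityIdeal μ f) := by
  refine ⟨fun p => ⟨p, ⟨subset_rfl, subset_rfl⟩, inter_empty _⟩, ?_, ?_⟩
  · intro Y Z hY hZY p
    obtain ⟨q, hq, hqY⟩ := hY p
    exact ⟨q, hq, subset_empty_iff.mp (hqY ▸ inter_subset_inter_right _ hZY)⟩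
  · intro 𝒴 h𝒴 hcard p
    have h𝒴' : ∀ Y ∈ 𝒴, Y ∈ densityIdeal μ f := fun Y hY => h𝒴 hY
    set A := buildChain f h𝒴' p with hA
    have hcard' : #↥𝒴 < μ := hcard
    have spec := buildChain_spec hμ f h𝒴' p hcard'
    -- chain property among all A i
    have hchain : ∀ j k : ↥𝒴,
        ((A j).pos ⊆ (A k).pos ∧ (A j).neg ⊆ (A k).neg) ∨
        ((A k).pos ⊆ (A j).pos ∧ (A k).neg ⊆ (A j).neg) := by
      intro j k
      rcases trichotomous_of WellOrderingRel j k with h | h | h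
      · exact Or.inl ((spec k).2.1 j h)
      · subst h; exact Or.inl ⟨subset_rfl, subset_rfl⟩
      · exact Or.inr ((spec j).2.1 k h)
    set Qpos := p.pos ∪ ⋃ i : ↥𝒴, (A i).pos with hQpos
    set Qneg := p.neg ∪ ⋃ i : ↥𝒴, (A i).neg with hQneg
    have hdisj : Disjoint Qpos Qneg := by
      rw [Set.disjoint_left]
      rintro x hx hx'
      rcases hx with hx | hx
      · rcases hx' with hx' | hx'
        · exact (Set.disjoint_left.mp p.disj) hx hx'
        · simp only [mem_iUnion] at hx'
          obtain ⟨j, hxj⟩ := hx'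
          exact (Set.disjoint_left.mp (A j).disj) ((spec j).1.1 hx) hxj
      · simp only [mem_iUnion] at hx
        obtain ⟨j, hxj⟩ := hx
        rcases hx' with hx' | hx'
        · exact (Set.disjoint_left.mp (A j).disj) hxj ((spec j).1.2 hx')
        · simp only [mem_iUnion] at hx'
          obtain ⟨k, hxk⟩ := hx'
          rcases hchain j k with ⟨h1, _⟩ | ⟨_, h2⟩
          · exact (Set.disjoint_left.mp (A k).disj) (h1 hxj) hxk
          · exact (Set.disjoint_left.mp (A j).disj) hxj (h2 hxk)
    have hQ1 : #↥Qpos < μ := small_union' hμ hcard' p.posSmall (fun j => (A j).posSmall)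
    have hQ2 : #↥Qneg < μ := small_union' hμ hcard' p.negSmall (fun j => (A j).negSmall)
    refine ⟨⟨Qpos, Qneg, hdisj, hQ1, hQ2⟩, ⟨subset_union_left, subset_union_left⟩, ?_⟩
    rw [eq_empty_iff_forall_notMem]
    rintro x ⟨hx, hxY⟩
    obtain ⟨Y, hY, hxY⟩ := hxY
    have hle : AddLe ⟨Qpos, Qneg, hdisj, hQ1, hQ2⟩ (A ⟨Y, hY⟩) := by
      constructor
      · exact (subset_iUnion (fun i : ↥𝒴 => (A i).pos) ⟨Y, hY⟩).trans subset_union_right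
      · exact (subset_iUnion (fun i : ↥𝒴 => (A i).neg) ⟨Y, hY⟩).trans subset_union_right
    have := XInd_mono f hle hx
    have h0 := (spec ⟨Y, hY⟩).2.2
    rw [eq_empty_iff_forall_notMem] at h0
    exact h0 x ⟨this, hxY⟩
end

section
/- Let F ⊆ P(κ) be a (μ,κ)-densely maximal independent family of size θ. Then the map p ↦ [X_p]_{I_F} is a dense embedding of Add(μ,θ) into the quotient Boolean algebra P(κ)/I_F, where I_F is the density ideal; moreover I_F is a μ-complete uniform ideal on κ (containing all sets of size < κ). -/
open Cardinal Set

universe u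

section Aux

variable {μ : Cardinal.{u}} {I S : Type u} {f : I → Set S}

lemma addLe_refl (p : AddCond μ I) : AddLe p p := ⟨subset_rfl, subset_rfl⟩

lemma addLe_trans {p q r : AddCond μ I} (h1 : AddLe r q) (h2 : AddLe q p) :
    AddLe r p := ⟨h2.1.trans h1.1, h2.2.trans h1.2⟩

lemma xind_mono {p q : AddCond μ I} (h : AddLe q p) : XInd f q ⊆ XInd f p := by
  rintro x ⟨hx1, hx2⟩
  refine ⟨?_, ?_⟩
  · simp only [mem_iInter] at hx1 ⊢
    exact fun i hi => hx1 i (h.1 hi)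
  · intro hx
    simp only [mem_iUnion] at hx hx2
    obtain ⟨i, hi, hxi⟩ := hx
    exact hx2 ⟨i, h.2 hi, hxi⟩

lemma empty_mem_densityIdeal : (∅ : Set S) ∈ densityIdeal μ f :=
  fun p => ⟨p, addLe_refl p, by simp⟩

lemma xind_nonempty (hinf : Cardinal.aleph0 ≤ #S)
    (hind : ∀ p : AddCond μ I, #(XInd f p) = #S) (p : AddCond μ I) :
    (XInd f p).Nonempty := by
  rw [← Set.nonempty_coe_sort, ← Cardinal.mk_ne_zero_iff, hind p]
  exact (Cardinal.aleph0_pos.trans_le hinf).ne'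

open scoped Classical in
/-- The union of `p` with a small family of conditions, when the resulting pair
of sets is disjoint (otherwise, junk value `p`). -/
noncomputable def combo (hμ : μ.IsRegular) (p : AddCond μ I) {α : Type u}
    (hα : #α < μ) (c : α → AddCond μ I) : AddCond μ I :=
  if h : Disjoint (p.pos ∪ ⋃ a, (c a).pos) (p.neg ∪ ⋃ a, (c a).neg) then
    { pos := p.pos ∪ ⋃ a, (c a).pos
      neg := p.neg ∪ ⋃ a, (c a).neg
      disj := h
      posSmall := by
        refine (Cardinal.mk_union_le _ _).trans_lt
          (Cardinal.add_lt_of_lt hμ.aleph0_le p.posSmall ?_)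
        exact Cardinal.mk_iUnion_le_sum_mk.trans_lt
          (Cardinal.sum_lt_of_isRegular hμ hα fun a => (c a).posSmall)
      negSmall := by
        refine (Cardinal.mk_union_le _ _).trans_lt
          (Cardinal.add_lt_of_lt hμ.aleph0_le p.negSmall ?_)
        exact Cardinal.mk_iUnion_le_sum_mk.trans_lt
          (Cardinal.sum_lt_of_isRegular hμ hα fun a => (c a).negSmall) }
  else p

lemma combo_disj (p : AddCond μ I) {α : Type u} (c : α → AddCond μ I)
    (hle : ∀ a, AddLe (c a) p)
    (htot : ∀ a b, AddLe (c a) (c b) ∨ AddLe (c b) (c a)) :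
    Disjoint (p.pos ∪ ⋃ a, (c a).pos) (p.neg ∪ ⋃ a, (c a).neg) := by
  rw [Set.disjoint_left]
  rintro x (hx | hx) (hy | hy)
  · exact Set.disjoint_left.1 p.disj hx hy
  · simp only [mem_iUnion] at hy
    obtain ⟨a, ha⟩ := hy
    exact Set.disjoint_left.1 (c a).disj ((hle a).1 hx) ha
  · simp only [mem_iUnion] at hx
    obtain ⟨a, ha⟩ := hx
    exact Set.disjoint_left.1 (c a).disj ha ((hle a).2 hy)
  · simp only [mem_iUnion] at hx hy
    obtain ⟨a, ha⟩ := hx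
    obtain ⟨b, hb⟩ := hy
    rcases htot a b with h | h
    · exact Set.disjoint_left.1 (c a).disj ha (h.2 hb)
    · exact Set.disjoint_left.1 (c b).disj (h.1 ha) hb

lemma combo_le (hμ : μ.IsRegular) (p : AddCond μ I) {α : Type u}
    (hα : #α < μ) (c : α → AddCond μ I)
    (h : Disjoint (p.pos ∪ ⋃ a, (c a).pos) (p.neg ∪ ⋃ a, (c a).neg)) :
    AddLe (combo hμ p hα c) p ∧ ∀ a, AddLe (combo hμ p hα c) (c a) := by
  rw [combo, dif_pos h]
  exact ⟨⟨Set.subset_union_left, Set.subset_union_left⟩,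
    fun a => ⟨(Set.subset_iUnion (fun a => (c a).pos) a).trans Set.subset_union_right,
      (Set.subset_iUnion (fun a => (c a).neg) a).trans Set.subset_union_right⟩⟩

/-- A chosen extension of `r` avoiding `Y`. -/
noncomputable def extCond {Y : Set S} (hY : Y ∈ densityIdeal μ f)
    (r : AddCond μ I) : AddCond μ I := (hY r).choose

lemma extCond_le {Y : Set S} (hY : Y ∈ densityIdeal μ f) (r : AddCond μ I) :
    AddLe (extCond hY r) r := (hY r).choose_spec.1

lemma extCond_kill {Y : Set S} (hY : Y ∈ densityIdeal μ f) (r : AddCond μ I) :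
    XInd f (extCond hY r) ∩ Y = ∅ := (hY r).choose_spec.2

lemma mk_subrel_lt {α : Type u} (hα : #α < μ) (a : α) :
    #{b : α // WellOrderingRel b a} < μ :=
  lt_of_le_of_lt (Cardinal.mk_subtype_le _) hα

/-- The decreasing chain of conditions below `p₀` killing the sets `Y a` one by one. -/
noncomputable def chain (hμ : μ.IsRegular) (p₀ : AddCond μ I) {α : Type u}
    (hα : #α < μ) {Y : α → Set S} (hY : ∀ a, Y a ∈ densityIdeal μ f) :
    α → AddCond μ I :=
  (IsWellFounded.wf (r := @WellOrderingRel α)).fix fun a ih =>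
    extCond (hY a) (combo hμ p₀ (mk_subrel_lt hα a)
      (fun b : {b : α // WellOrderingRel b a} => ih b.1 b.2))

lemma chain_eq (hμ : μ.IsRegular) (p₀ : AddCond μ I) {α : Type u}
    (hα : #α < μ) {Y : α → Set S} (hY : ∀ a, Y a ∈ densityIdeal μ f) (a : α) :
    chain hμ p₀ hα hY a = extCond (hY a) (combo hμ p₀ (mk_subrel_lt hα a)
      (fun b : {b : α // WellOrderingRel b a} => chain hμ p₀ hα hY b.1)) :=
  WellFounded.fix_eq _ _ _

lemma chain_spec (hμ : μ.IsRegular) (p₀ : AddCond μ I) {α : Type u}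
    (hα : #α < μ) {Y : α → Set S} (hY : ∀ a, Y a ∈ densityIdeal μ f) (a : α) :
    AddLe (chain hμ p₀ hα hY a) p₀ ∧
    (∀ b, WellOrderingRel b a → AddLe (chain hμ p₀ hα hY a) (chain hμ p₀ hα hY b)) ∧
    XInd f (chain hμ p₀ hα hY a) ∩ Y a = ∅ := by
  induction a using (IsWellFounded.wf (r := @WellOrderingRel α)).induction with
  | _ a ih =>
    set c : {b : α // WellOrderingRel b a} → AddCond μ I :=
      fun b => chain hμ p₀ hα hY b.1 with hc
    have htot : ∀ b₁ b₂, AddLe (c b₁) (c b₂) ∨ AddLe (c b₂) (c b₁) := by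
      rintro ⟨b₁, h₁⟩ ⟨b₂, h₂⟩
      rcases trichotomous_of WellOrderingRel b₁ b₂ with h | h | h
      · exact Or.inr ((ih b₂ h₂).2.1 b₁ h)
      · subst h; exact Or.inl (addLe_refl _)
      · exact Or.inl ((ih b₁ h₁).2.1 b₂ h)
    have hdisj := combo_disj p₀ c (fun b => (ih b.1 b.2).1) htot
    obtain ⟨h1, h2⟩ := combo_le hμ p₀ (mk_subrel_lt hα a) c hdisj
    have heq := chain_eq hμ p₀ hα hY a
    have hle : AddLe (chain hμ p₀ hα hY a) (combo hμ p₀ (mk_subrel_lt hα a) c) := by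
      rw [heq]; exact extCond_le _ _
    refine ⟨addLe_trans hle h1, fun b hb => addLe_trans hle (h2 ⟨b, hb⟩), ?_⟩
    rw [heq]; exact extCond_kill _ _

/-- μ-completeness: a union of fewer than `μ` sets in the density ideal is in it. -/
lemma sUnion_mem (hμ : μ.IsRegular) {𝒴 : Set (Set S)}
    (hsub : 𝒴 ⊆ densityIdeal μ f) (hcard : #𝒴 < μ) :
    ⋃₀ 𝒴 ∈ densityIdeal μ f := by
  intro p
  set Y : ↥𝒴 → Set S := fun y => y.1 with hYdef
  have hY : ∀ y : ↥𝒴, Y y ∈ densityIdeal μ f := fun y => hsub y.2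
  set g : ↥𝒴 → AddCond μ I := chain hμ p hcard hY with hg
  have hspec := chain_spec hμ p hcard hY
  have htot : ∀ a b, AddLe (g a) (g b) ∨ AddLe (g b) (g a) := by
    intro a b
    rcases trichotomous_of WellOrderingRel a b with h | h | h
    · exact Or.inr ((hspec b).2.1 a h)
    · subst h; exact Or.inl (addLe_refl _)
    · exact Or.inl ((hspec a).2.1 b h)
  have hdisj := combo_disj p g (fun a => (hspec a).1) htot
  obtain ⟨h1, h2⟩ := combo_le hμ p hcard g hdisj
  refine ⟨combo hμ p hcard g, h1, ?_⟩
  rw [Set.eq_empty_iff_forall_notMem]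
  rintro x ⟨hx1, hx2⟩
  obtain ⟨t, ht, hxt⟩ := hx2
  have : x ∈ XInd f (g ⟨t, ht⟩) := xind_mono (h2 ⟨t, ht⟩) hx1
  have hk := (hspec ⟨t, ht⟩).2.2
  rw [Set.eq_empty_iff_forall_notMem] at hk
  exact hk x ⟨this, hxt⟩

end Aux

/-- If `F = {f i : i ∈ I}` is a `(μ,κ)`-densely maximal independent
family, then `p ↦ [X_p]` is a dense embedding of `Add(μ,|F|)` into `𝒫(κ)/I_F`
(each `X_p` is `I_F`-positive, the map preserves order and incompatibility, and its
range is dense), and `I_F` is a `μ`-complete uniform ideal on `κ`. -/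
theorem stmt_6 {I : Type u} {S : Type u} (μ : Cardinal.{u}) (hμ : μ.IsRegular)
    (hinf : Cardinal.aleph0 ≤ #S)
    (f : I → Set S) (hinj : Function.Injective f)
    (hind : ∀ p : AddCond μ I, #(XInd f p) = #S)
    (hdm : ∀ p : AddCond μ I, ∀ A ⊆ XInd f p, ∃ q : AddCond μ I,
      AddLe q p ∧ (XInd f q ∩ A = ∅ ∨ XInd f q ⊆ A)) :
    (∀ p : AddCond μ I, XInd f p ∉ densityIdeal μ f) ∧
    (∀ p q : AddCond μ I, AddLe q p → XInd f q \ XInd f p ∈ densityIdeal μ f) ∧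
    (∀ p q : AddCond μ I, (¬∃ r : AddCond μ I, AddLe r p ∧ AddLe r q) →
      XInd f p ∩ XInd f q ∈ densityIdeal μ f) ∧
    (∀ Y : Set S, Y ∉ densityIdeal μ f →
      ∃ p : AddCond μ I, XInd f p \ Y ∈ densityIdeal μ f) ∧
    (∀ Y Z : Set S, Y ∈ densityIdeal μ f → Z ⊆ Y → Z ∈ densityIdeal μ f) ∧
    (∀ 𝒴 : Set (Set S), 𝒴 ⊆ densityIdeal μ f → #𝒴 < μ →
      ⋃₀ 𝒴 ∈ densityIdeal μ f) ∧
    (∀ Y : Set S, #Y < #S → Y ∈ densityIdeal μ f) := by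
  refine ⟨?_, ?_, ?_, ?_, ?_, ?_, ?_⟩
  · -- positivity
    intro p hp
    obtain ⟨q, hqp, hq⟩ := hp p
    obtain ⟨x, hx⟩ := xind_nonempty hinf hind q
    rw [Set.eq_empty_iff_forall_notMem] at hq
    exact hq x ⟨hx, xind_mono hqp hx⟩
  · -- order preservation
    intro p q h
    rw [Set.diff_eq_empty.2 (xind_mono h)]
    exact empty_mem_densityIdeal
  · -- incompatibility preservation
    intro p q hpq
    have key : ∃ i, (i ∈ p.pos ∧ i ∈ q.neg) ∨ (i ∈ q.pos ∧ i ∈ p.neg) := by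
      by_contra hk
      push_neg at hk
      refine hpq ⟨⟨p.pos ∪ q.pos, p.neg ∪ q.neg, ?_, ?_, ?_⟩,
        ⟨Set.subset_union_left, Set.subset_union_left⟩,
        ⟨Set.subset_union_right, Set.subset_union_right⟩⟩
      · rw [Set.disjoint_left]
        rintro i (hi | hi) (hj | hj)
        · exact Set.disjoint_left.1 p.disj hi hj
        · exact (hk i).1 hi hj
        · exact (hk i).2 hi hj
        · exact Set.disjoint_left.1 q.disj hi hj
      · exact (Cardinal.mk_union_le _ _).trans_lt
          (Cardinal.add_lt_of_lt hμ.aleph0_le p.posSmall q.posSmall)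
      · exact (Cardinal.mk_union_le _ _).trans_lt
          (Cardinal.add_lt_of_lt hμ.aleph0_le p.negSmall q.negSmall)
    obtain ⟨i, hi⟩ := key
    have : XInd f p ∩ XInd f q = ∅ := by
      rw [Set.eq_empty_iff_forall_notMem]
      rintro x ⟨⟨hx1, hx2⟩, ⟨hy1, hy2⟩⟩
      simp only [mem_iInter] at hx1 hy1
      simp only [mem_iUnion] at hx2 hy2
      rcases hi with ⟨h1, h2⟩ | ⟨h1, h2⟩
      · exact hy2 ⟨i, h2, hx1 i h1⟩
      · exact hx2 ⟨i, h2, hy1 i h1⟩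
    rw [this]
    exact empty_mem_densityIdeal
  · -- density of the range
    intro Y hY
    simp only [densityIdeal, mem_setOf_eq] at hY
    push_neg at hY
    obtain ⟨p, hp⟩ := hY
    obtain ⟨q, hqp, hq | hq⟩ := hdm p (XInd f p ∩ Y) Set.inter_subset_left
    · exfalso
      obtain ⟨x, hx1, hx2⟩ := hp q hqp
      rw [Set.eq_empty_iff_forall_notMem] at hq
      exact hq x ⟨hx1, xind_mono hqp hx1, hx2⟩
    · refine ⟨q, ?_⟩
      rw [Set.diff_eq_empty.2 (hq.trans Set.inter_subset_right)]
      exact empty_mem_densityIdeal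
  · -- downward closure
    intro Y Z hY hZY p
    obtain ⟨q, hqp, hq⟩ := hY p
    refine ⟨q, hqp, ?_⟩
    rw [Set.eq_empty_iff_forall_notMem] at hq ⊢
    exact fun x ⟨hx1, hx2⟩ => hq x ⟨hx1, hZY hx2⟩
  · -- μ-completeness
    exact fun 𝒴 hsub hcard => sUnion_mem hμ hsub hcard
  · -- uniformity
    intro Y hYcard p
    obtain ⟨q, hqp, hq | hq⟩ := hdm p (XInd f p ∩ Y) Set.inter_subset_left
    · refine ⟨q, hqp, ?_⟩
      rw [Set.eq_empty_iff_forall_notMem] at hq ⊢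
      rintro x ⟨hx1, hx2⟩
      exact hq x ⟨hx1, xind_mono hqp hx1, hx2⟩
    · exfalso
      have hle : #(XInd f q) ≤ #Y :=
        Cardinal.mk_le_mk_of_subset (hq.trans Set.inter_subset_right)
      rw [hind q] at hle
      exact absurd hle (not_le.2 hYcard)
end

section
/- Suppose μ is regular, κ and θ are cardinals, and I is a μ-complete ideal on κ containing all subsets of κ of size < κ, such that there is a dense embedding e : Add(μ,θ) → P(κ)/I and there is a subfamily J ⊆ I of cardinality ≤ θ that is ⊆-cofinal in I. Then there exists a (μ,κ)-densely maximal independent family F ⊆ P(κ) of cardinality θ with I = I_F. In particular θ ∈ sp_i(μ,κ). -/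
open Cardinal Set

universe u

namespace Stmt8

variable {μ : Cardinal.{u}} {T : Type u}

/-- The condition with a single positive coordinate. -/
def single (hμ : ℵ₀ ≤ μ) (α : T) : AddCond μ T where
  pos := {α}
  neg := ∅
  disj := by simp
  posSmall := by
    rw [Cardinal.mk_singleton]; exact one_lt_aleph0.trans_le hμ
  negSmall := by
    rw [Cardinal.mk_emptyCollection]; exact aleph0_pos.trans_le hμ

/-- Extending a condition by one positive coordinate. -/
def extendPos (hμ : ℵ₀ ≤ μ) (p : AddCond μ T) (α : T) (h : α ∉ p.neg) : AddCond μ T where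
  pos := insert α p.pos
  neg := p.neg
  disj := by
    rw [Set.disjoint_left]
    rintro x (rfl | hx) hx'
    · exact h hx'
    · exact Set.disjoint_left.mp p.disj hx hx'
  posSmall := lt_of_le_of_lt Cardinal.mk_insert_le
    (Cardinal.add_lt_of_lt hμ p.posSmall (one_lt_aleph0.trans_le hμ))
  negSmall := p.negSmall

/-- Joining two compatible conditions. -/
def join (hμ : ℵ₀ ≤ μ) (p q : AddCond μ T) (h1 : Disjoint p.pos q.neg)
    (h2 : Disjoint q.pos p.neg) : AddCond μ T where
  pos := p.pos ∪ q.pos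
  neg := p.neg ∪ q.neg
  disj := by
    rw [Set.disjoint_left]
    rintro x (hx | hx) (hx' | hx')
    · exact Set.disjoint_left.mp p.disj hx hx'
    · exact Set.disjoint_left.mp h1 hx hx'
    · exact Set.disjoint_left.mp h2 hx hx'
    · exact Set.disjoint_left.mp q.disj hx hx'
  posSmall := lt_of_le_of_lt (Cardinal.mk_union_le _ _)
    (Cardinal.add_lt_of_lt hμ p.posSmall q.posSmall)
  negSmall := lt_of_le_of_lt (Cardinal.mk_union_le _ _)
    (Cardinal.add_lt_of_lt hμ p.negSmall q.negSmall)

lemma join_le_left (hμ : ℵ₀ ≤ μ) (p q : AddCond μ T) (h1 : Disjoint p.pos q.neg)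
    (h2 : Disjoint q.pos p.neg) : AddLe (join hμ p q h1 h2) p :=
  ⟨Set.subset_union_left, Set.subset_union_left⟩

lemma join_le_right (hμ : ℵ₀ ≤ μ) (p q : AddCond μ T) (h1 : Disjoint p.pos q.neg)
    (h2 : Disjoint q.pos p.neg) : AddLe (join hμ p q h1 h2) q :=
  ⟨Set.subset_union_right, Set.subset_union_right⟩

lemma le_single (hμ : ℵ₀ ≤ μ) (p : AddCond μ T) (α : T) (hα : α ∈ p.pos) :
    AddLe p (single hμ α) :=
  ⟨Set.singleton_subset_iff.mpr hα, Set.empty_subset _⟩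

lemma incompat_single (hμ : ℵ₀ ≤ μ) (p : AddCond μ T) (β : T) (hβ : β ∈ p.neg) :
    ¬∃ r : AddCond μ T, AddLe r p ∧ AddLe r (single hμ β) := by
  rintro ⟨r, ⟨_, hp2⟩, ⟨hq1, _⟩⟩
  exact Set.disjoint_left.mp r.disj (hq1 rfl) (hp2 hβ)

lemma addLe_trans {q s p : AddCond μ T} (h1 : AddLe q s) (h2 : AddLe s p) : AddLe q p :=
  ⟨h2.1.trans h1.1, h2.2.trans h1.2⟩

end Stmt8

/-- Suppose `μ` is regular and `I` is a `μ`-complete ideal on `κ`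
containing all sets of size `< κ`, such that `Add(μ,θ)` embeds densely into
`𝒫(κ)/I` and some `J ⊆ I` of cardinality `≤ θ` is `⊆`-cofinal in `I`.  Then there
is a `(μ,κ)`-densely maximal independent family of cardinality `θ` (given by an
injective enumeration `g`) whose density ideal is exactly `I`; in particular
`θ ∈ sp_𝔦(μ,κ)`. -/
theorem stmt_8 {T : Type u} {S : Type u} (μ θ : Cardinal.{u}) (hμ : μ.IsRegular)
    (hθ : #T = θ) (hinf : Cardinal.aleph0 ≤ #S)
    (I : Set (Set S))
    (hdown : ∀ Y Z : Set S, Y ∈ I → Z ⊆ Y → Z ∈ I)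
    (hcomplete : ∀ 𝒴 : Set (Set S), 𝒴 ⊆ I → #𝒴 < μ → ⋃₀ 𝒴 ∈ I)
    (hsmall : ∀ Y : Set S, #Y < #S → Y ∈ I)
    (hproper : (Set.univ : Set S) ∉ I)
    (e : AddCond μ T → Set S)
    (hepos : ∀ p, e p ∉ I)
    (heord : ∀ p q, AddLe q p → e q \ e p ∈ I)
    (heinc : ∀ p q, (¬∃ r : AddCond μ T, AddLe r p ∧ AddLe r q) → e p ∩ e q ∈ I)
    (hedense : ∀ Y : Set S, Y ∉ I → ∃ p, e p \ Y ∈ I)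
    (J : Set (Set S)) (hJI : J ⊆ I) (hJcard : #J ≤ θ)
    (hJcof : ∀ Y ∈ I, ∃ Z ∈ J, Y ⊆ Z) :
    ∃ g : T → Set S, Function.Injective g ∧
      (∀ p : AddCond μ T, #(XInd g p) = #S) ∧
      (∀ p : AddCond μ T, ∀ A ⊆ XInd g p, ∃ q : AddCond μ T,
        AddLe q p ∧ (XInd g q ∩ A = ∅ ∨ XInd g q ⊆ A)) ∧
      densityIdeal μ g = I := by
  classical
  have hμ0 : ℵ₀ ≤ μ := hμ.aleph0_le
  have hempty : (∅ : Set S) ∈ I := hsmall ∅ (by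
    rw [Cardinal.mk_emptyCollection]; exact aleph0_pos.trans_le hinf)
  -- closure of I under pairwise unions
  have hpair : ∀ Y Z : Set S, Y ∈ I → Z ∈ I → Y ∪ Z ∈ I := by
    intro Y Z hY hZ
    have h1 : #({Y, Z} : Set (Set S)) < μ :=
      lt_of_lt_of_le ((Set.toFinite _).lt_aleph0) hμ0
    have h2 := hcomplete {Y, Z} (by rintro W (rfl | rfl) <;> assumption) h1
    rwa [Set.sUnion_pair] at h2
  -- closure of I under small indexed unions
  have hbU : ∀ (s : Set T) (F : T → Set S), #s < μ → (∀ α ∈ s, F α ∈ I) →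
      (⋃ α ∈ s, F α) ∈ I := by
    intro s F hs hF
    have h1 : #(F '' s) < μ := lt_of_le_of_lt Cardinal.mk_image_le hs
    have h2 := hcomplete (F '' s) (by rintro W ⟨a, ha, rfl⟩; exact hF a ha) h1
    rwa [Set.sUnion_image] at h2
  -- J covers S
  have hJcover : ∀ x : S, ∃ Z ∈ J, x ∈ Z := by
    intro x
    have h1 : ({x} : Set S) ∈ I := hsmall {x} (by
      rw [Cardinal.mk_singleton]; exact one_lt_aleph0.trans_le hinf)
    obtain ⟨Z, hZ, hsub⟩ := hJcof {x} h1
    exact ⟨Z, hZ, hsub rfl⟩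
  -- μ ≤ #J, hence μ ≤ #T
  have hμJ : μ ≤ #J := by
    by_contra h
    push_neg at h
    have h2 := hcomplete J hJI h
    have h3 : ⋃₀ J = Set.univ := by
      ext x
      simp only [mem_sUnion, mem_univ, iff_true]
      obtain ⟨Z, hZ, hx⟩ := hJcover x
      exact ⟨Z, hZ, hx⟩
    rw [h3] at h2
    exact hproper h2
  have hμT : μ ≤ #T := hθ ▸ (hμJ.trans hJcard)
  have hJ0 : ℵ₀ ≤ #(↥J) := hμ0.trans hμJ
  -- a selector f : T → J with all fibers of size ≥ μ
  obtain ⟨f, hfI, hfresh⟩ : ∃ f : T → Set S, (∀ α, f α ∈ I) ∧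
      (∀ P : Set T, #P < μ → ∀ Z ∈ J, ∃ α, α ∉ P ∧ f α = Z) := by
    have hcard : #(↥J × T) = #T := by
      have h1 : #(↥J × T) = #(↥J) * #T := by simp [Cardinal.mk_prod]
      rw [h1, Cardinal.mul_eq_max hJ0 (hμ0.trans hμT)]
      exact max_eq_right (hθ ▸ hJcard)
    obtain ⟨e'⟩ := Cardinal.eq.mp hcard
    refine ⟨fun α => ((e'.symm α).1 : Set S), fun α => hJI (e'.symm α).1.2, ?_⟩
    intro P hP Z hZ
    by_contra hcon
    push_neg at hcon
    have hmem : ∀ t : T, e' (⟨Z, hZ⟩, t) ∈ P := by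
      intro t
      by_contra hm
      exact hcon _ hm (by simp)
    have hinj : Function.Injective (fun t : T => (⟨e' (⟨Z, hZ⟩, t), hmem t⟩ : ↥P)) := by
      intro t1 t2 h12
      have h13 : e' (⟨Z, hZ⟩, t1) = e' (⟨Z, hZ⟩, t2) := congrArg Subtype.val h12
      exact (Prod.ext_iff.mp (e'.injective h13)).2
    have h14 : #T ≤ #P := Cardinal.mk_le_of_injective hinj
    exact absurd (hμT.trans h14) (not_le.mpr hP)
  -- the independent family
  obtain ⟨g, hgdef⟩ : ∃ g : T → Set S, ∀ α, g α = e (Stmt8.single hμ0 α) \ f α :=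
    ⟨_, fun _ => rfl⟩
  -- Lemma A : e p \ X_p ∈ I
  have hA : ∀ p : AddCond μ T, e p \ XInd g p ∈ I := by
    intro p
    have hsub : e p \ XInd g p ⊆
        (⋃ α ∈ p.pos, ((e p \ e (Stmt8.single hμ0 α)) ∪ f α)) ∪
        (⋃ β ∈ p.neg, (e p ∩ e (Stmt8.single hμ0 β))) := by
      rintro x ⟨hxe, hxn⟩
      by_cases hb : x ∈ ⋃ β ∈ p.neg, g β
      · right
        obtain ⟨β, hβ, hxb⟩ := Set.mem_iUnion₂.mp hb
        rw [hgdef] at hxb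
        exact Set.mem_biUnion hβ ⟨hxe, hxb.1⟩
      · have ha : x ∉ ⋂ α ∈ p.pos, g α := fun hmem => hxn ⟨hmem, hb⟩
        left
        have ha' : ∃ α ∈ p.pos, x ∉ g α := by
          by_contra hcon
          push_neg at hcon
          exact ha (Set.mem_iInter₂.mpr hcon)
        obtain ⟨α, hα, hxa⟩ := ha'
        rw [hgdef] at hxa
        refine Set.mem_biUnion hα ?_
        by_cases hxe' : x ∈ e (Stmt8.single hμ0 α)
        · right
          by_contra hxf
          exact hxa ⟨hxe', hxf⟩
        · exact Or.inl ⟨hxe, hxe'⟩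
    refine hdown _ _ (hpair _ _ ?_ ?_) hsub
    · exact hbU _ _ p.posSmall (fun α hα =>
        hpair _ _ (heord _ _ (Stmt8.le_single hμ0 p α hα)) (hfI α))
    · exact hbU _ _ p.negSmall (fun β hβ =>
        heinc _ _ (Stmt8.incompat_single hμ0 p β hβ))
  -- Lemma C : X_p ∉ I
  have hC : ∀ p : AddCond μ T, XInd g p ∉ I := by
    intro p hcon
    refine hepos p (hdown _ _ (hpair _ _ (hA p) hcon) ?_)
    intro x hx
    by_cases h : x ∈ XInd g p
    · exact Or.inr h
    · exact Or.inl ⟨hx, h⟩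
  -- Lemma D : the pure Boolean combination of the e (single α) is contained in e p mod I
  have hD : ∀ p : AddCond μ T,
      ((⋂ α ∈ p.pos, e (Stmt8.single hμ0 α)) \
        ((⋃ β ∈ p.neg, e (Stmt8.single hμ0 β)) ∪ e p)) ∈ I := by
    intro p
    set D := (⋂ α ∈ p.pos, e (Stmt8.single hμ0 α)) \
        ((⋃ β ∈ p.neg, e (Stmt8.single hμ0 β)) ∪ e p) with hDdef
    by_contra hcon
    obtain ⟨r, hr⟩ := hedense D hcon
    have hincomp : ¬∃ s : AddCond μ T, AddLe s r ∧ AddLe s p := by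
      rintro ⟨s, hsr, hsp⟩
      have h1 : e s ⊆ (e s \ e r) ∪ (e r \ D) ∪ (e s \ e p) := by
        intro x hx
        by_cases h2 : x ∈ e r
        · by_cases h3 : x ∈ D
          · exact Or.inr ⟨hx, fun hxp => h3.2 (Set.mem_union_right _ hxp)⟩
          · exact Or.inl (Or.inr ⟨h2, h3⟩)
        · exact Or.inl (Or.inl ⟨hx, h2⟩)
      exact hepos s (hdown _ _
        (hpair _ _ (hpair _ _ (heord r s hsr) hr) (heord p s hsp)) h1)
    by_cases hd1 : Disjoint p.pos r.neg
    · by_cases hd2 : Disjoint r.pos p.neg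
      · exact hincomp ⟨Stmt8.join hμ0 r p hd2 hd1,
          Stmt8.join_le_left hμ0 r p hd2 hd1, Stmt8.join_le_right hμ0 r p hd2 hd1⟩
      · obtain ⟨β, hβr, hβp⟩ := Set.not_disjoint_iff.mp hd2
        have h1 : e r \ e (Stmt8.single hμ0 β) ∈ I :=
          heord _ _ (Stmt8.le_single hμ0 r β hβr)
        have h2 : e r ⊆ (e r \ D) ∪ (e r \ e (Stmt8.single hμ0 β)) := by
          intro x hx
          by_cases h3 : x ∈ D
          · exact Or.inr ⟨hx, fun hxb =>
              h3.2 (Set.mem_union_left _ (Set.mem_biUnion hβp hxb))⟩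
          · exact Or.inl ⟨hx, h3⟩
        exact hepos r (hdown _ _ (hpair _ _ hr h1) h2)
    · obtain ⟨α, hαp, hαr⟩ := Set.not_disjoint_iff.mp hd1
      have h1 : e r ∩ e (Stmt8.single hμ0 α) ∈ I :=
        heinc _ _ (Stmt8.incompat_single hμ0 r α hαr)
      have h2 : e r ⊆ (e r \ D) ∪ (e r ∩ e (Stmt8.single hμ0 α)) := by
        intro x hx
        by_cases h3 : x ∈ D
        · exact Or.inr ⟨hx, Set.mem_iInter₂.mp h3.1 α hαp⟩
        · exact Or.inl ⟨hx, h3⟩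
      exact hepos r (hdown _ _ (hpair _ _ hr h1) h2)
  -- Lemma B : X_p \ e p ∈ I
  have hB : ∀ p : AddCond μ T, XInd g p \ e p ∈ I := by
    intro p
    have hsub : XInd g p \ e p ⊆
        ((⋂ α ∈ p.pos, e (Stmt8.single hμ0 α)) \
          ((⋃ β ∈ p.neg, e (Stmt8.single hμ0 β)) ∪ e p)) ∪ (⋃ β ∈ p.neg, f β) := by
      rintro x ⟨hx, hxp⟩
      by_cases h2 : x ∈ ⋃ β ∈ p.neg, e (Stmt8.single hμ0 β)
      · right
        obtain ⟨β, hβ, hxb⟩ := Set.mem_iUnion₂.mp h2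
        refine Set.mem_biUnion hβ ?_
        by_contra hxf
        refine hx.2 (Set.mem_biUnion hβ ?_)
        rw [hgdef]
        exact ⟨hxb, hxf⟩
      · left
        refine ⟨?_, fun hmem => ?_⟩
        · refine Set.mem_iInter₂.mpr fun α hα => ?_
          have h3 := Set.mem_iInter₂.mp hx.1 α hα
          rw [hgdef] at h3
          exact h3.1
        · rcases hmem with h3 | h3
          · exact h2 h3
          · exact hxp h3
    exact hdown _ _ (hpair _ _ (hD p) (hbU _ _ p.negSmall fun β _ => hfI β)) hsub
  -- Fresh extension: kill any member of I exactly
  have hFE : ∀ (p : AddCond μ T) (Y : Set S), Y ∈ I → ∃ q : AddCond μ T,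
      AddLe q p ∧ XInd g q ∩ Y = ∅ ∧ XInd g q ⊆ XInd g p := by
    intro p Y hY
    obtain ⟨Z, hZ, hYZ⟩ := hJcof Y hY
    obtain ⟨α, hαn, hαf⟩ := hfresh p.neg p.negSmall Z hZ
    refine ⟨Stmt8.extendPos hμ0 p α hαn,
      ⟨Set.subset_insert _ _, subset_rfl⟩, ?_, ?_⟩
    · apply Set.eq_empty_iff_forall_notMem.mpr
      rintro x ⟨hx, hxY⟩
      have hxa : x ∈ g α := Set.mem_iInter₂.mp hx.1 α (Set.mem_insert _ _)
      rw [hgdef] at hxa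
      exact hxa.2 (hαf ▸ hYZ hxY)
    · rintro x ⟨hx1, hx2⟩
      exact ⟨Set.mem_iInter₂.mpr fun i hi =>
        Set.mem_iInter₂.mp hx1 i (Set.mem_insert_of_mem _ hi), hx2⟩
  refine ⟨g, ?_, ?_, ?_, ?_⟩
  · -- injectivity
    intro α β hαβ
    by_contra hne
    have h1 : (1 : Cardinal.{u}) < μ := one_lt_aleph0.trans_le hμ0
    set q : AddCond μ T :=
      ⟨{α}, {β}, by simpa using hne,
        by rw [Cardinal.mk_singleton]; exact h1,
        by rw [Cardinal.mk_singleton]; exact h1⟩ with hqdef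
    have h2 : XInd g q = g α \ g β := by
      simp [XInd, hqdef]
    have h3 := hC q
    rw [h2, hαβ, Set.diff_self] at h3
    exact h3 hempty
  · -- sizes
    intro p
    refine le_antisymm (Cardinal.mk_set_le _) ?_
    by_contra h
    push_neg at h
    exact hC p (hsmall _ h)
  · -- dense maximality
    intro p A hApX
    by_cases hAI : A ∈ I
    · obtain ⟨q, hq1, hq2, _⟩ := hFE p A hAI
      exact ⟨q, hq1, Or.inl hq2⟩
    · obtain ⟨r, hr⟩ := hedense A hAI
      have hcompat : ∃ s : AddCond μ T, AddLe s r ∧ AddLe s p := by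
        by_contra hcon
        have h1 : e r ∩ e p ∈ I := heinc r p hcon
        have h2 : e r ⊆ (e r \ A) ∪ (XInd g p \ e p) ∪ (e r ∩ e p) := by
          intro x hx
          by_cases h3 : x ∈ A
          · by_cases h4 : x ∈ e p
            · exact Or.inr ⟨hx, h4⟩
            · exact Or.inl (Or.inr ⟨hApX h3, h4⟩)
          · exact Or.inl (Or.inl ⟨hx, h3⟩)
        exact hepos r (hdown _ _ (hpair _ _ (hpair _ _ hr (hB p)) h1) h2)
      obtain ⟨s, hsr, hsp⟩ := hcompat
      have hXsA : XInd g s \ A ∈ I := by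
        have hsub : XInd g s \ A ⊆ (XInd g s \ e s) ∪ (e s \ e r) ∪ (e r \ A) := by
          rintro x ⟨hx, hxA⟩
          by_cases h2 : x ∈ e s
          · by_cases h3 : x ∈ e r
            · exact Or.inr ⟨h3, hxA⟩
            · exact Or.inl (Or.inr ⟨h2, h3⟩)
          · exact Or.inl (Or.inl ⟨hx, h2⟩)
        exact hdown _ _ (hpair _ _ (hpair _ _ (hB s) (heord r s hsr)) hr) hsub
      obtain ⟨q, hq1, hq2, hq3⟩ := hFE s _ hXsA
      refine ⟨q, Stmt8.addLe_trans hq1 hsp, Or.inr ?_⟩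
      intro x hx
      by_cases h5 : x ∈ A
      · exact h5
      · have h6 : x ∈ XInd g q ∩ (XInd g s \ A) := ⟨hx, hq3 hx, h5⟩
        rw [hq2] at h6
        exact absurd h6 (Set.notMem_empty x)
  · -- density ideal = I
    ext Y
    constructor
    · intro hY
      by_contra hYI
      obtain ⟨r, hr⟩ := hedense Y hYI
      obtain ⟨q, hqr, hq⟩ := hY r
      have hsub : XInd g q ⊆ (XInd g q \ e q) ∪ (e q \ e r) ∪ (e r \ Y) := by
        intro x hx
        by_cases h2 : x ∈ e q
        · by_cases h3 : x ∈ e r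
          · refine Or.inr ⟨h3, fun hxY => ?_⟩
            have h4 : x ∈ XInd g q ∩ Y := ⟨hx, hxY⟩
            rw [hq] at h4
            exact absurd h4 (Set.notMem_empty x)
          · exact Or.inl (Or.inr ⟨h2, h3⟩)
        · exact Or.inl (Or.inl ⟨hx, h2⟩)
      exact hC q (hdown _ _
        (hpair _ _ (hpair _ _ (hB q) (heord r q hqr)) hr) hsub)
    · intro hY p
      obtain ⟨q, hq1, hq2, _⟩ := hFE p Y hY
      exact ⟨q, hq1, hq2⟩
end

section
/- Suppose μ is regular, θ ≥ μ, and F is a maximal μ-free family of cardinality θ ≥ μ of subsets of some set S. Then for some cardinal κ, there is a (μ,κ)-densely maximal independent family of cardinality θ, where κ = min{|X_q| : q ≤ p*} for the condition p* below which F restricts to a densely maximal family. In particular θ ∈ sp_i(μ,κ). -/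
open Cardinal Set

universe u

/-- The Boolean combination of `A`, `B` relative to the ambient set `Z`
(the convention `⋂∅ = Z`). -/
def RBComb {S : Type u} (Z : Set S) (A B : Set (Set S)) : Set S :=
  (Z ∩ ⋂₀ A) \ ⋃₀ B

/-- `μ`-freeness relative to an ambient set `Z`. -/
def RelMuFree {S : Type u} (μ : Cardinal.{u}) (Z : Set S) (G : Set (Set S)) : Prop :=
  ∀ A B : Set (Set S), A ⊆ G → B ⊆ G → Disjoint A B → #A < μ → #B < μ →
    (RBComb Z A B).Nonempty

namespace Stmt19
variable {S : Type u}

def Cond (μ : Cardinal.{u}) (F : Set (Set S)) (p : Set (Set S) × Set (Set S)) : Prop :=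
  p.1 ⊆ F ∧ p.2 ⊆ F ∧ Disjoint p.1 p.2 ∧ #p.1 < μ ∧ #p.2 < μ

def XC (p : Set (Set S) × Set (Set S)) : Set S := ⋂₀ p.1 \ ⋃₀ p.2

/-- `p` extends `q`. -/
def Ext (p q : Set (Set S) × Set (Set S)) : Prop := q.1 ⊆ p.1 ∧ q.2 ⊆ p.2

lemma ext_refl (p : Set (Set S) × Set (Set S)) : Ext p p := ⟨subset_rfl, subset_rfl⟩

lemma ext_trans {p q r : Set (Set S) × Set (Set S)} (h1 : Ext p q) (h2 : Ext q r) : Ext p r :=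
  ⟨h2.1.trans h1.1, h2.2.trans h1.2⟩

lemma XC_mono {p q : Set (Set S) × Set (Set S)} (h : Ext p q) : XC p ⊆ XC q := by
  intro x hx
  exact ⟨fun t ht => hx.1 t (h.1 ht), fun hmem => hx.2 (mem_of_mem_of_subset hmem (sUnion_mono h.2))⟩

lemma small_union {μ : Cardinal.{u}} (hμ : ℵ₀ ≤ μ) {A B : Set (Set S)}
    (hA : #A < μ) (hB : #B < μ) : #(↥(A ∪ B)) < μ :=
  (mk_union_le A B).trans_lt (add_lt_of_lt hμ hA hB)

lemma cond_meet {μ : Cardinal.{u}} {F : Set (Set S)} (hμ : ℵ₀ ≤ μ)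
    {p q : Set (Set S) × Set (Set S)} (hp : Cond μ F p) (hq : Cond μ F q)
    (hc : Disjoint (p.1 ∪ q.1) (p.2 ∪ q.2)) :
    Cond μ F (p.1 ∪ q.1, p.2 ∪ q.2) ∧ Ext (p.1 ∪ q.1, p.2 ∪ q.2) p ∧
      Ext (p.1 ∪ q.1, p.2 ∪ q.2) q := by
  refine ⟨⟨union_subset hp.1 hq.1, union_subset hp.2.1 hq.2.1, hc,
    small_union hμ hp.2.2.2.1 hq.2.2.2.1, small_union hμ hp.2.2.2.2 hq.2.2.2.2⟩,
    ⟨subset_union_left, subset_union_left⟩, ⟨subset_union_right, subset_union_right⟩⟩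

lemma incompat_disjoint {μ : Cardinal.{u}} {F : Set (Set S)}
    {p q : Set (Set S) × Set (Set S)} (hp : Cond μ F p) (hq : Cond μ F q)
    (hc : ¬ Disjoint (p.1 ∪ q.1) (p.2 ∪ q.2)) :
    Disjoint (XC p) (XC q) := by
  rw [Set.not_disjoint_iff] at hc
  obtain ⟨Y, hY1, hY2⟩ := hc
  rw [Set.disjoint_left]
  intro x hxp hxq
  rcases hY1 with h1 | h1 <;> rcases hY2 with h2 | h2
  · exact hp.2.2.1.ne_of_mem h1 h2 rfl
  · exact hxq.2 ⟨Y, h2, hxp.1 Y h1⟩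
  · exact hxp.2 ⟨Y, h2, hxq.1 Y h1⟩
  · exact hq.2.2.1.ne_of_mem h1 h2 rfl

lemma XC_nonempty {μ : Cardinal.{u}} {F : Set (Set S)} (hfree : MuFree μ F)
    {p : Set (Set S) × Set (Set S)} (hp : Cond μ F p) : (XC p).Nonempty :=
  hfree p.1 p.2 hp.1 hp.2.1 hp.2.2.1 hp.2.2.2.1 hp.2.2.2.2

end Stmt19

namespace Stmt19
variable {S : Type u}

/-- `W` witnesses failure of dense maximality below `q`. -/
def BadWit (μ : Cardinal.{u}) (F : Set (Set S)) (q : Set (Set S) × Set (Set S)) (W : Set S) :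
    Prop :=
  W ⊆ XC q ∧ ∀ r, Cond μ F r → Ext r q → (XC r ∩ W).Nonempty ∧ (XC r \ W).Nonempty

lemma empty_cond {μ : Cardinal.{u}} {F : Set (Set S)} (hμ : μ.IsRegular) :
    Cond μ F ((∅, ∅) : Set (Set S) × Set (Set S)) := by
  refine ⟨empty_subset _, empty_subset _, disjoint_bot_left, ?_, ?_⟩ <;>
    · show #(∅ : Set (Set S)) < μ
      rw [mk_emptyCollection]
      exact lt_of_lt_of_le aleph0_pos hμ.aleph0_le

lemma exists_DM {μ : Cardinal.{u}} (hμ : μ.IsRegular) {F : Set (Set S)}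
    (hfree : MuFree μ F) (hmax : ∀ B : Set S, MuFree μ (insert B F) → B ∈ F) :
    ∃ b, Cond μ F b ∧ ∀ p, Cond μ F p → Ext p b → ∀ E ⊆ XC p,
      ∃ r, Cond μ F r ∧ Ext r p ∧ (XC r ∩ E = ∅ ∨ XC r ⊆ E) := by
  have hℵ0 : ℵ₀ ≤ μ := hμ.aleph0_le
  by_contra hcon
  push_neg at hcon
  have H : ∀ b, Cond μ F b → ∃ p, Cond μ F p ∧ Ext p b ∧ ∃ W, BadWit μ F p W := by
    intro b hb
    obtain ⟨p, hp, hpb, E, hE, hbad⟩ := hcon b hb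
    refine ⟨p, hp, hpb, E, hE, fun r hr hrp => ?_⟩
    obtain ⟨h1, h2⟩ := hbad r hr hrp
    obtain ⟨a, ha, hna⟩ := not_subset_iff_exists_mem_notMem.1 h2
    exact ⟨h1, a, ha, hna⟩
  obtain ⟨𝒜, h𝒜⟩ : ∃ 𝒜, Maximal (· ∈ {𝒜 : Set (Set (Set S) × Set (Set S)) |
      (∀ q ∈ 𝒜, Cond μ F q ∧ ∃ W, BadWit μ F q W) ∧
      𝒜.Pairwise fun p q => ¬ Disjoint (p.1 ∪ q.1) (p.2 ∪ q.2)}) 𝒜 := by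
    apply zorn_subset
    intro c hc hchain
    refine ⟨⋃₀ c, ⟨fun q hq => ?_, fun p hp q hq hne => ?_⟩, fun s hs => subset_sUnion_of_mem hs⟩
    · obtain ⟨a, hac, hqa⟩ := hq
      exact (hc hac).1 q hqa
    · obtain ⟨a, hac, hpa⟩ := hp
      obtain ⟨a', hac', hqa'⟩ := hq
      rcases hchain.total hac hac' with h | h
      · exact (hc hac').2 (h hpa) hqa' hne
      · exact (hc hac).2 hpa (h hqa') hne
  have hwitex : ∀ q, q ∈ 𝒜 → ∃ W, BadWit μ F q W := fun q hq => (h𝒜.1.1 q hq).2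
  have hcond𝒜 : ∀ q, q ∈ 𝒜 → Cond μ F q := fun q hq => (h𝒜.1.1 q hq).1
  choose wit hwitspec using hwitex
  set B : Set S := ⋃ q, ⋃ (h : q ∈ 𝒜), wit q h with hBdef
  have hmemB : ∀ x : S, x ∈ B ↔ ∃ q, ∃ h : q ∈ 𝒜, x ∈ wit q h := by
    intro x; rw [hBdef]; simp only [mem_iUnion]
  -- every condition has a common extension with some member of 𝒜
  have key : ∀ r, Cond μ F r → ∃ q, ∃ hq : q ∈ 𝒜, ∃ m, Cond μ F m ∧ Ext m r ∧ Ext m q := by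
    intro r hr
    obtain ⟨p, hp, hpr, hpbad⟩ := H r hr
    have hcompat : ∃ q ∈ 𝒜, Disjoint (p.1 ∪ q.1) (p.2 ∪ q.2) := by
      by_contra hnc
      push_neg at hnc
      have hmem : insert p 𝒜 ∈ {𝒜 : Set (Set (Set S) × Set (Set S)) |
          (∀ q ∈ 𝒜, Cond μ F q ∧ ∃ W, BadWit μ F q W) ∧
          𝒜.Pairwise fun p q => ¬ Disjoint (p.1 ∪ q.1) (p.2 ∪ q.2)} := by
        constructor
        · rintro q (rfl | hq)
          · exact ⟨hp, hpbad⟩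
          · exact h𝒜.1.1 q hq
        · intro a ha b hb hne
          rcases ha with rfl | ha <;> rcases hb with rfl | hb
          · exact absurd rfl hne
          · exact hnc b hb
          · rw [union_comm a.1 _, union_comm a.2 _]
            exact hnc a ha
          · exact h𝒜.1.2 ha hb hne
      have hsub : insert p 𝒜 ⊆ 𝒜 := h𝒜.2 hmem (subset_insert p 𝒜)
      have hpmem : p ∈ 𝒜 := hsub (mem_insert p 𝒜)
      have := hnc p hpmem
      rw [union_self, union_self] at this
      exact this hp.2.2.1
    obtain ⟨q, hq𝒜, hdisj⟩ := hcompat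
    obtain ⟨hm, hmp, hmq⟩ := cond_meet hℵ0 hp (hcond𝒜 q hq𝒜) hdisj
    exact ⟨q, hq𝒜, _, hm, ext_trans hmp hpr, hmq⟩
  -- XC q ∩ B = XC q ∩ wit q for antichain elements
  have hXB : ∀ q, ∀ hq : q ∈ 𝒜, ∀ x ∈ XC q, x ∈ B ↔ x ∈ wit q hq := by
    intro q hq x hx
    rw [hmemB]
    constructor
    · rintro ⟨q', hq', hxq'⟩
      by_cases hqq : q' = q
      · subst hqq; exact hxq'
      · exfalso
        have hdisj : Disjoint (XC q') (XC q) :=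
          incompat_disjoint (hcond𝒜 q' hq') (hcond𝒜 q hq) (h𝒜.1.2 hq' hq hqq)
        exact hdisj.ne_of_mem ((hwitspec q' hq').1 hxq') hx rfl
    · intro hxq; exact ⟨q, hq, hxq⟩
  -- Claim A: every condition's combination meets B and its complement
  have claimA : ∀ r, Cond μ F r → (XC r ∩ B).Nonempty ∧ (XC r \ B).Nonempty := by
    intro r hr
    obtain ⟨q, hq, m, hm, hmr, hmq⟩ := key r hr
    obtain ⟨⟨x, hx1, hx2⟩, ⟨y, hy1, hy2⟩⟩ := (hwitspec q hq).2 m hm hmq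
    have hxq : x ∈ XC q := XC_mono hmq hx1
    have hyq : y ∈ XC q := XC_mono hmq hy1
    refine ⟨⟨x, XC_mono hmr hx1, (hXB q hq x hxq).2 hx2⟩,
      ⟨y, XC_mono hmr hy1, fun hyB => hy2 ((hXB q hq y hyq).1 hyB)⟩⟩
  -- Claim C: B ∉ F
  have hBnotF : B ∉ F := by
    intro hBF
    obtain ⟨q, hq, m, hm, hmr, hmq⟩ := key (∅, ∅) (empty_cond hμ)
    have hbw := hwitspec q hq
    by_cases hB1 : B ∈ q.1
    · -- XC q ⊆ B, hence XC q ⊆ wit q, contradicting (XC q \ wit q).Nonempty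
      obtain ⟨y, hy1, hy2⟩ := (hbw.2 q (hcond𝒜 q hq) (ext_refl q)).2
      have hyB : y ∈ B := hy1.1 B hB1
      exact hy2 ((hXB q hq y hy1).1 hyB)
    · by_cases hB2 : B ∈ q.2
      · obtain ⟨x, hx1, hx2⟩ := (hbw.2 q (hcond𝒜 q hq) (ext_refl q)).1
        exact hx1.2 ⟨B, hB2, (hmemB x).2 ⟨q, hq, hx2⟩⟩
      · -- extend q by putting B on the negative side
        have hrcond : Cond μ F (q.1, insert B q.2) := by
          refine ⟨(hcond𝒜 q hq).1, insert_subset hBF (hcond𝒜 q hq).2.1, ?_, (hcond𝒜 q hq).2.2.2.1, ?_⟩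
          · rw [Set.disjoint_left]
            rintro Y hY1 (rfl | hY2)
            · exact hB1 hY1
            · exact (hcond𝒜 q hq).2.2.1.ne_of_mem hY1 hY2 rfl
          · exact (mk_insert_le).trans_lt
              (add_lt_of_lt hℵ0 (hcond𝒜 q hq).2.2.2.2 (one_lt_aleph0.trans_le hℵ0))
        obtain ⟨x, hx1, hx2⟩ := (hbw.2 _ hrcond ⟨subset_rfl, subset_insert _ _⟩).1
        have hxB : x ∈ B := (hmemB x).2 ⟨q, hq, hx2⟩
        exact hx1.2 ⟨B, mem_insert _ _, hxB⟩
  -- Claim B: insert B F is μ-free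
  have hinsfree : MuFree μ (insert B F) := by
    intro A B' hA hB' hd hcA hcB'
    by_cases hBA : B ∈ A
    · have hA0 : A \ {B} ⊆ F := by
        intro a ha
        rcases hA ha.1 with rfl | h
        · exact absurd rfl ha.2
        · exact h
      have hBB' : B ∉ B' := fun h => hd.ne_of_mem hBA h rfl
      have hB'F : B' ⊆ F := by
        intro b hb
        rcases hB' hb with rfl | h
        · exact absurd hb hBB'
        · exact h
      have hrcond : Cond μ F (A \ {B}, B') :=
        ⟨hA0, hB'F, (hd.mono_left diff_subset), (mk_le_mk_of_subset diff_subset).trans_lt hcA, hcB'⟩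
      obtain ⟨x, hx1, hx2⟩ := (claimA _ hrcond).1
      refine ⟨x, fun t ht => ?_, hx1.2⟩
      by_cases htB : t = B
      · subst htB; exact hx2
      · exact hx1.1 t ⟨ht, htB⟩
    · by_cases hBB' : B ∈ B'
      · have hB0 : B' \ {B} ⊆ F := by
          intro b hb
          rcases hB' hb.1 with rfl | h
          · exact absurd rfl hb.2
          · exact h
        have hAF : A ⊆ F := by
          intro a ha
          rcases hA ha with rfl | h
          · exact absurd ha hBA
          · exact h
        have hrcond : Cond μ F (A, B' \ {B}) :=
          ⟨hAF, hB0, (hd.mono_right diff_subset), hcA,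
            (mk_le_mk_of_subset diff_subset).trans_lt hcB'⟩
        obtain ⟨x, hx1, hx2⟩ := (claimA _ hrcond).2
        refine ⟨x, hx1.1, fun hmem => ?_⟩
        obtain ⟨t, ht, hxt⟩ := hmem
        by_cases htB : t = B
        · subst htB; exact hx2 hxt
        · exact hx1.2 ⟨t, ⟨ht, htB⟩, hxt⟩
      · have hAF : A ⊆ F := fun a ha => (hA ha).resolve_left (fun h => hBA (h ▸ ha))
        have hB'F : B' ⊆ F := fun b hb => (hB' hb).resolve_left (fun h => hBB' (h ▸ hb))
        exact hfree A B' hAF hB'F hd hcA hcB'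
  exact hBnotF (hmax B hinsfree)

end Stmt19

/-- if `μ` is regular and `F` is a maximal `μ`-free family of
cardinality `θ ≥ μ` of subsets of `S`, then for some cardinal `κ` there is a
`(μ,κ)`-densely maximal independent family of cardinality `θ`, consisting of subsets
of an ambient set `Z` of size `κ`: all relative Boolean combinations have size `κ`,
dense maximality holds, and the family is maximal among `μ`-free families on `Z`;
in particular `θ ∈ sp_𝔦(μ,κ)`. -/
theorem stmt_19 {S : Type u} (μ θ : Cardinal.{u}) (hμ : μ.IsRegular) (hθ : μ ≤ θ)
    (F : Set (Set S)) (hcard : #F = θ) (hfree : MuFree μ F)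
    (hmax : ∀ B : Set S, MuFree μ (insert B F) → B ∈ F) :
    ∃ (κ : Cardinal.{u}) (Z : Set S) (G : Set (Set S)),
      #Z = κ ∧ #G = θ ∧ (∀ X ∈ G, X ⊆ Z) ∧
      (∀ A B : Set (Set S), A ⊆ G → B ⊆ G → Disjoint A B → #A < μ → #B < μ →
        #(RBComb Z A B) = κ) ∧
      (∀ A B : Set (Set S), A ⊆ G → B ⊆ G → Disjoint A B → #A < μ → #B < μ →
        ∀ E ⊆ RBComb Z A B, ∃ A' B' : Set (Set S), A ⊆ A' ∧ B ⊆ B' ∧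
          A' ⊆ G ∧ B' ⊆ G ∧ Disjoint A' B' ∧ #A' < μ ∧ #B' < μ ∧
          (RBComb Z A' B' ∩ E = ∅ ∨ RBComb Z A' B' ⊆ E)) ∧
      (∀ W : Set S, W ⊆ Z → RelMuFree μ Z (insert W G) → W ∈ G) := by
  classical
  open Stmt19 in
  have hℵ0 : ℵ₀ ≤ μ := hμ.aleph0_le
  have h1μ : (1 : Cardinal) < μ := one_lt_aleph0.trans_le hℵ0
  obtain ⟨b, hb, hDM⟩ := Stmt19.exists_DM hμ hfree hmax
  set T : Set Cardinal.{u} :=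
    {c | ∃ p, Stmt19.Cond μ F p ∧ Stmt19.Ext p b ∧ #(Stmt19.XC p) = c} with hT
  have hTne : T.Nonempty := ⟨_, b, hb, Stmt19.ext_refl b, rfl⟩
  set κ : Cardinal.{u} := sInf T with hκ
  obtain ⟨q, hqcond, hqb, hqcard⟩ : κ ∈ T := csInf_mem hTne
  have hκle : ∀ r, Stmt19.Cond μ F r → Stmt19.Ext r b → κ ≤ #(Stmt19.XC r) :=
    fun r h1 h2 => csInf_le' ⟨r, h1, h2, rfl⟩
  set P : Set (Set S) := q.1
  set Q : Set (Set S) := q.2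
  set Z : Set S := Stmt19.XC q with hZ
  have hsize : ∀ r, Stmt19.Cond μ F r → Stmt19.Ext r q → #(Stmt19.XC r) = κ := by
    intro r h1 h2
    refine le_antisymm ?_ (hκle r h1 (Stmt19.ext_trans h2 hqb))
    calc #(Stmt19.XC r) ≤ #(Stmt19.XC q) := mk_le_mk_of_subset (Stmt19.XC_mono h2)
      _ = κ := hqcard
  set F' : Set (Set S) := F \ (P ∪ Q) with hF'
  set G : Set (Set S) := (· ∩ Z) '' F' with hG
  -- injectivity of Y ↦ Y ∩ Z on F'
  have hinj : Set.InjOn (· ∩ Z) F' := by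
    intro Y hY Y' hY' heq
    by_contra hne
    have hrcond : Stmt19.Cond μ F (insert Y P, insert Y' Q) := by
      refine ⟨insert_subset hY.1 hqcond.1, insert_subset hY'.1 hqcond.2.1, ?_, ?_, ?_⟩
      · rw [Set.disjoint_left]
        rintro T (rfl | hT1) (rfl | hT2)
        · exact hne rfl
        · exact hY.2 (Or.inr hT2)
        · exact hY'.2 (Or.inl hT1)
        · exact hqcond.2.2.1.ne_of_mem hT1 hT2 rfl
      · exact (mk_insert_le).trans_lt (add_lt_of_lt hℵ0 hqcond.2.2.2.1 h1μ)
      · exact (mk_insert_le).trans_lt (add_lt_of_lt hℵ0 hqcond.2.2.2.2 h1μ)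
    obtain ⟨x, hx1, hx2⟩ := Stmt19.XC_nonempty hfree hrcond
    have hxZ : x ∈ Z := ⟨fun t ht => hx1 t (Or.inr ht), fun ⟨t, ht, hxt⟩ => hx2 ⟨t, Or.inr ht, hxt⟩⟩
    have hxY : x ∈ Y := hx1 Y (Or.inl rfl)
    have hxY' : x ∉ Y' := fun h => hx2 ⟨Y', Or.inl rfl, h⟩
    have heq' : Y ∩ Z = Y' ∩ Z := heq
    have : x ∈ Y' ∩ Z := by rw [← heq']; exact ⟨hxY, hxZ⟩
    exact hxY' this.1
  -- a section of Y ↦ Y ∩ Z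
  set sec : Set S → Set S :=
    fun g => if h : ∃ Y, Y ∈ F' ∧ Y ∩ Z = g then h.choose else ∅ with hsecdef
  have hsec : ∀ g ∈ G, sec g ∈ F' ∧ sec g ∩ Z = g := by
    rintro g ⟨Y, hY, rfl⟩
    have h : ∃ Y', Y' ∈ F' ∧ Y' ∩ Z = Y ∩ Z := ⟨Y, hY, rfl⟩
    rw [hsecdef]
    simp only [dif_pos h]
    exact h.choose_spec
  -- the lifted condition associated to A, B ⊆ G
  have hlift : ∀ A B' : Set (Set S), A ⊆ G → B' ⊆ G → Disjoint A B' → #A < μ → #B' < μ →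
      Stmt19.Cond μ F (P ∪ sec '' A, Q ∪ sec '' B') ∧
      Stmt19.Ext (P ∪ sec '' A, Q ∪ sec '' B') q ∧
      RBComb Z A B' = Stmt19.XC (P ∪ sec '' A, Q ∪ sec '' B') := by
    intro A B' hA hB' hd hcA hcB'
    have hA0 : sec '' A ⊆ F' := by rintro _ ⟨g, hg, rfl⟩; exact (hsec g (hA hg)).1
    have hB0 : sec '' B' ⊆ F' := by rintro _ ⟨g, hg, rfl⟩; exact (hsec g (hB' hg)).1
    refine ⟨⟨union_subset hqcond.1 (fun Y hY => (hA0 hY).1),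
        union_subset hqcond.2.1 (fun Y hY => (hB0 hY).1), ?_, ?_, ?_⟩,
        ⟨subset_union_left, subset_union_left⟩, ?_⟩
    · rw [Set.disjoint_left]
      rintro T (hT1 | hT1) (hT2 | hT2)
      · exact hqcond.2.2.1.ne_of_mem hT1 hT2 rfl
      · exact (hB0 hT2).2 (Or.inl hT1)
      · exact (hA0 hT1).2 (Or.inr hT2)
      · obtain ⟨g, hg, hgT⟩ := hT1
        obtain ⟨g', hg', hg'T⟩ := hT2
        have : g = g' := by
          rw [← (hsec g (hA hg)).2, ← (hsec g' (hB' hg')).2, hgT, hg'T]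
        exact hd.ne_of_mem hg (this ▸ hg') rfl
    · exact Stmt19.small_union hℵ0 hqcond.2.2.2.1 ((mk_image_le).trans_lt hcA)
    · exact Stmt19.small_union hℵ0 hqcond.2.2.2.2 ((mk_image_le).trans_lt hcB')
    · ext x
      constructor
      · rintro ⟨⟨hxZ, hxA⟩, hxB⟩
        refine ⟨fun Y hY => ?_, ?_⟩
        · rcases hY with hY | ⟨g, hg, rfl⟩
          · exact hxZ.1 Y hY
          · have hxg : x ∈ sec g ∩ Z := by rw [(hsec g (hA hg)).2]; exact hxA g hg
            exact hxg.1
        · rintro ⟨Y, hY | ⟨g, hg, rfl⟩, hxY⟩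
          · exact hxZ.2 ⟨Y, hY, hxY⟩
          · refine hxB ⟨g, hg, ?_⟩
            rw [← (hsec g (hB' hg)).2]
            exact ⟨hxY, hxZ⟩
      · intro hx
        have hxZ : x ∈ Z :=
          ⟨fun t ht => hx.1 t (Or.inl ht), fun ⟨t, ht, hxt⟩ => hx.2 ⟨t, Or.inl ht, hxt⟩⟩
        refine ⟨⟨hxZ, fun g hg => ?_⟩, ?_⟩
        · rw [← (hsec g (hA hg)).2]
          exact ⟨hx.1 _ (Or.inr ⟨g, hg, rfl⟩), hxZ⟩
        · rintro ⟨g, hg, hxg⟩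
          rw [← (hsec g (hB' hg)).2] at hxg
          exact hx.2 ⟨sec g, Or.inr ⟨g, hg, rfl⟩, hxg.1⟩
  -- dense maximality for G
  have hdm5 : ∀ A B' : Set (Set S), A ⊆ G → B' ⊆ G → Disjoint A B' → #A < μ → #B' < μ →
      ∀ E ⊆ RBComb Z A B', ∃ A'' B'' : Set (Set S), A ⊆ A'' ∧ B' ⊆ B'' ∧
        A'' ⊆ G ∧ B'' ⊆ G ∧ Disjoint A'' B'' ∧ #A'' < μ ∧ #B'' < μ ∧
        (RBComb Z A'' B'' ∩ E = ∅ ∨ RBComb Z A'' B'' ⊆ E) := by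
    intro A B' hA hB' hd hcA hcB' E hE
    obtain ⟨hrc, hrq, hreq⟩ := hlift A B' hA hB' hd hcA hcB'
    set r : Set (Set S) × Set (Set S) := (P ∪ sec '' A, Q ∪ sec '' B') with hrdef
    rw [hreq] at hE
    obtain ⟨r', hr'c, hr'r, hr'alt⟩ := hDM r hrc (Stmt19.ext_trans hrq hqb) E hE
    have hQr' : Q ⊆ r'.2 := subset_union_left.trans hr'r.2
    have hPr' : P ⊆ r'.1 := subset_union_left.trans hr'r.1
    have h1F' : r'.1 \ P ⊆ F' := by
      intro Y hY
      exact ⟨hr'c.1 hY.1, by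
        rintro (h | h)
        · exact hY.2 h
        · exact hr'c.2.2.1.ne_of_mem hY.1 (hQr' h) rfl⟩
    have h2F' : r'.2 \ Q ⊆ F' := by
      intro Y hY
      exact ⟨hr'c.2.1 hY.1, by
        rintro (h | h)
        · exact hr'c.2.2.1.ne_of_mem (hPr' h) hY.1 rfl
        · exact hY.2 h⟩
    set A'' : Set (Set S) := A ∪ (· ∩ Z) '' (r'.1 \ P) with hA''
    set B'' : Set (Set S) := B' ∪ (· ∩ Z) '' (r'.2 \ Q) with hB''
    have hA''rep : A'' ⊆ (· ∩ Z) '' (r'.1 \ P) := by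
      rintro c (hc | hc)
      · refine ⟨sec c, ⟨hr'r.1 (Or.inr ⟨c, hc, rfl⟩), ((hsec c (hA hc)).1).2 ∘ Or.inl⟩,
          (hsec c (hA hc)).2⟩
      · exact hc
    have hB''rep : B'' ⊆ (· ∩ Z) '' (r'.2 \ Q) := by
      rintro c (hc | hc)
      · refine ⟨sec c, ⟨hr'r.2 (Or.inr ⟨c, hc, rfl⟩), ((hsec c (hB' hc)).1).2 ∘ Or.inr⟩,
          (hsec c (hB' hc)).2⟩
      · exact hc
    refine ⟨A'', B'', subset_union_left, subset_union_left,
      union_subset hA (fun c ⟨Y, hY, h⟩ => ⟨Y, h1F' hY, h⟩),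
      union_subset hB' (fun c ⟨Y, hY, h⟩ => ⟨Y, h2F' hY, h⟩), ?_, ?_, ?_, ?_⟩
    · rw [Set.disjoint_left]
      intro c hc1 hc2
      obtain ⟨Y, hY, hYc⟩ := hA''rep hc1
      obtain ⟨Y', hY', hY'c⟩ := hB''rep hc2
      have : Y = Y' := hinj (h1F' hY) (h2F' hY') (by rw [hYc, hY'c])
      exact hr'c.2.2.1.ne_of_mem hY.1 (this ▸ hY'.1) rfl
    · exact Stmt19.small_union hℵ0 hcA ((mk_image_le).trans_lt
        ((mk_le_mk_of_subset diff_subset).trans_lt hr'c.2.2.2.1))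
    · exact Stmt19.small_union hℵ0 hcB' ((mk_image_le).trans_lt
        ((mk_le_mk_of_subset diff_subset).trans_lt hr'c.2.2.2.2))
    · have heq2 : RBComb Z A'' B'' = Stmt19.XC r' := by
        ext x
        constructor
        · rintro ⟨⟨hxZ, hxA⟩, hxB⟩
          refine ⟨fun Y hY => ?_, ?_⟩
          · by_cases hYP : Y ∈ P
            · exact hxZ.1 Y hYP
            · exact (hxA _ (Or.inr ⟨Y, ⟨hY, hYP⟩, rfl⟩) : x ∈ Y ∩ Z).1
          · rintro ⟨Y, hY, hxY⟩
            by_cases hYQ : Y ∈ Q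
            · exact hxZ.2 ⟨Y, hYQ, hxY⟩
            · exact hxB ⟨Y ∩ Z, Or.inr ⟨Y, ⟨hY, hYQ⟩, rfl⟩, hxY, hxZ⟩
        · intro hx
          have hxZ : x ∈ Z := Stmt19.XC_mono (Stmt19.ext_trans hr'r hrq) hx
          refine ⟨⟨hxZ, fun c hc => ?_⟩, ?_⟩
          · obtain ⟨Y, hY, rfl⟩ := hA''rep hc
            exact ⟨hx.1 Y hY.1, hxZ⟩
          · rintro ⟨c, hc, hxc⟩
            obtain ⟨Y, hY, rfl⟩ := hB''rep hc
            exact hx.2 ⟨Y, hY.1, hxc.1⟩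
      rw [heq2]
      exact hr'alt
  refine ⟨κ, Z, G, hqcard, ?_, ?_, ?_, hdm5, ?_⟩
  · -- #G = θ
    have hθℵ0 : ℵ₀ ≤ θ := hℵ0.trans hθ
    have hF'card : #F' = θ := by
      have hD : F' = F \ ((P ∪ Q) ∩ F) := by
        ext Y
        simp only [hF', mem_diff, mem_inter_iff, not_and]
        tauto
      have hsub : (P ∪ Q) ∩ F ⊆ F := inter_subset_right
      have hsum := mk_diff_add_mk hsub
      rw [hcard] at hsum
      have hDsmall : #((P ∪ Q) ∩ F : Set (Set S)) < θ :=
        ((mk_le_mk_of_subset inter_subset_left).trans_lt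
          (Stmt19.small_union hℵ0 hqcond.2.2.2.1 hqcond.2.2.2.2)).trans_le hθ
      rw [hD]
      by_contra hne
      have hlt : #(F \ ((P ∪ Q) ∩ F) : Set (Set S)) < θ :=
        lt_of_le_of_ne (by rw [← hsum]; exact self_le_add_right _ _) hne
      exact absurd hsum (by
        apply ne_of_lt
        exact add_lt_of_lt hθℵ0 hlt hDsmall)
    rw [hG, mk_image_eq_of_injOn _ _ hinj, hF'card]
  · rintro X ⟨Y, hY, rfl⟩
    exact inter_subset_right
  · -- all combinations have size κ
    intro A B' hA hB' hd hcA hcB'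
    obtain ⟨hrc, hrq, hreq⟩ := hlift A B' hA hB' hd hcA hcB'
    rw [hreq]
    exact hsize _ hrc hrq
  · -- maximality from dense maximality
    intro W hWZ hrel
    by_contra hWG
    have hRB0 : RBComb Z ∅ ∅ = Z := by
      simp [RBComb]
    have h0 : (∅ : Set (Set S)) ⊆ G := empty_subset _
    have hc0 : #(∅ : Set (Set S)) < μ := by
      rw [mk_emptyCollection]; exact aleph0_pos.trans_le hℵ0
    obtain ⟨A', B', -, -, hA'G, hB'G, hd', hcA', hcB', halt⟩ :=
      hdm5 ∅ ∅ h0 h0 disjoint_bot_left hc0 hc0 W (by rw [hRB0]; exact hWZ)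
    have hWA' : W ∉ A' := fun h => hWG (hA'G h)
    have hWB' : W ∉ B' := fun h => hWG (hB'G h)
    rcases halt with hempty | hsub
    · -- W positive side: combination is empty, contradicting relative freeness
      have := hrel (insert W A') B' (insert_subset (mem_insert _ _)
          (hA'G.trans (subset_insert _ _))) (hB'G.trans (subset_insert _ _))
          (by rw [Set.disjoint_left]
              rintro T (rfl | hT1) hT2
              · exact hWB' hT2
              · exact hd'.ne_of_mem hT1 hT2 rfl)
          ((mk_insert_le).trans_lt (add_lt_of_lt hℵ0 hcA' h1μ)) hcB'
      obtain ⟨x, hx⟩ := this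
      have hx' : x ∈ RBComb Z A' B' ∩ W := by
        refine ⟨⟨⟨hx.1.1, fun t ht => hx.1.2 t (Or.inr ht)⟩, hx.2⟩, hx.1.2 W (Or.inl rfl)⟩
      rw [hempty] at hx'
      exact hx'
    · -- W negative side
      have := hrel A' (insert W B') (hA'G.trans (subset_insert _ _))
          (insert_subset (mem_insert _ _) (hB'G.trans (subset_insert _ _)))
          (by rw [Set.disjoint_left]
              rintro T hT1 (rfl | hT2)
              · exact hWA' hT1
              · exact hd'.ne_of_mem hT1 hT2 rfl)
          hcA' ((mk_insert_le).trans_lt (add_lt_of_lt hℵ0 hcB' h1μ))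
      obtain ⟨x, hx⟩ := this
      have hxW : x ∈ W := hsub ⟨hx.1, fun ⟨t, ht, hxt⟩ => hx.2 ⟨t, Or.inr ht, hxt⟩⟩
      exact hx.2 ⟨W, Or.inl rfl, hxW⟩
end
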